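/- arXiv:1409.6022 — 5 statements merged into one kernel-verified Lean document; each statement's English description precedes it below -/
import Mathlib

section
/- In the conditional one-node model, the probability that none of the events E_1,…,E_m occurs is at most exp(−m·q + m²·q² + (q·p/K)·Σ_{1≤i<j≤m} |S_i* ∩ S_j*|). -/
open Finset

noncomputable def linkProb (K P : ℕ) : ℝ :=
  1 - ((P - K).choose K : ℝ) / (P.choose K : ℝ)

-- Probability of an event `A` in the conditional one-node model: `S` is a uniformly
-- random `K`-element subset of the pool `Fin P`, and `B : Fin m → Bool` is a vector of
-- independent Bernoulli(`p`) random variables, independent of `S`.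
open Classical in
noncomputable def condProb (m K P : ℕ) (p : ℝ)
    (A : Finset (Fin P) → (Fin m → Bool) → Prop) : ℝ :=
  (1 / (P.choose K : ℝ)) *
    ∑ S : {S : Finset (Fin P) // S.card = K},
      ∑ B : Fin m → Bool,
        ((∏ i : Fin m, if B i then p else 1 - p) *
          (if A S.1 B then 1 else 0))

-- product inequality: C(P-a-b,K)*C(P,K) ≤ C(P-a,K)*C(P-b,K)
lemma prod_ineq (P a b K : ℕ) (h : a + b + K ≤ P + 1) :
    (P - a - b).choose K * P.choose K ≤ (P - a).choose K * (P - b).choose K := by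
  have hd : (P - a - b).descFactorial K * P.descFactorial K ≤
      (P - a).descFactorial K * (P - b).descFactorial K := by
    rw [Nat.descFactorial_eq_prod_range, Nat.descFactorial_eq_prod_range,
      Nat.descFactorial_eq_prod_range, Nat.descFactorial_eq_prod_range,
      ← Finset.prod_mul_distrib, ← Finset.prod_mul_distrib]
    apply Finset.prod_le_prod'
    intro j hj
    have hjK : j < K := Finset.mem_range.mp hj
    have h1 : a + b + j ≤ P := by omega
    zify [show a + b + j ≤ P - 0 by omega, show b ≤ P - a by omega,
      show a ≤ P by omega, show b + j ≤ P - a by omega,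
      show j ≤ P - a - b by omega, show j ≤ P by omega, show a + j ≤ P by omega,
      show b + j ≤ P by omega, show j ≤ P - a by omega, show j ≤ P - b by omega,
      show a ≤ P - 0 by omega, show b ≤ P by omega]
    nlinarith [Int.ofNat_nonneg a, Int.ofNat_nonneg b]
  rw [Nat.descFactorial_eq_factorial_mul_choose, Nat.descFactorial_eq_factorial_mul_choose,
    Nat.descFactorial_eq_factorial_mul_choose, Nat.descFactorial_eq_factorial_mul_choose] at hd
  have hfac : 0 < Nat.factorial K * Nat.factorial K :=
    Nat.mul_pos (Nat.factorial_pos K) (Nat.factorial_pos K)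
  refine Nat.le_of_mul_le_mul_left ?_ hfac
  calc Nat.factorial K * Nat.factorial K * ((P - a - b).choose K * P.choose K)
          = Nat.factorial K * (P - a - b).choose K * (Nat.factorial K * P.choose K) := by ring
        _ ≤ Nat.factorial K * (P - a).choose K * (Nat.factorial K * (P - b).choose K) := hd
        _ = Nat.factorial K * Nat.factorial K * ((P - a).choose K * (P - b).choose K) := by
            ring

-- telescope
lemma tele (P K : ℕ) (hK : 1 ≤ K) :
    ∀ t : ℕ, (P - K + t).choose K =
      (P - K).choose K + ∑ j ∈ Finset.range t, (P - K + j).choose (K - 1) := by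
  obtain ⟨K', rfl⟩ : ∃ K', K = K' + 1 := ⟨K - 1, by omega⟩
  intro t
  induction t with
  | zero => simp
  | succ t ih =>
    rw [show P - (K'+1) + (t+1) = (P - (K'+1) + t) + 1 by omega,
      Nat.choose_succ_succ' (P-(K'+1)+t) K', Finset.sum_range_succ, ih]
    simp only [Nat.add_sub_cancel]
    omega

-- chord inequality
lemma chord (P K t : ℕ) (hK : 1 ≤ K) (ht : t ≤ K) (hKP : K ≤ P) :
    K * (P - K + t).choose K + t * (P - K).choose K ≤
      K * (P - K).choose K + t * P.choose K := by
  have hP : P = P - K + K := by omega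
  rw [tele P K hK t, show P.choose K = (P - K + K).choose K by rw [← hP], tele P K hK K]
  set e : ℕ → ℕ := fun j => (P - K + j).choose (K - 1) with he
  have key : K * ∑ j ∈ Finset.range t, e j ≤ t * ∑ j ∈ Finset.range K, e j := by
    rcases Nat.eq_zero_or_pos t with rfl | htpos
    · simp
    have hmono : ∀ i j, i ≤ j → e i ≤ e j := fun i j hij =>
      Nat.choose_le_choose _ (by omega)
    have h1 : ∑ j ∈ Finset.range t, e j ≤ t * e (t - 1) := by
      calc ∑ j ∈ Finset.range t, e j ≤ (Finset.range t).card • e (t-1) :=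
            Finset.sum_le_card_nsmul _ _ _ (fun j hj => hmono j (t-1) (by
              simp at hj; omega))
        _ = t * e (t - 1) := by simp [smul_eq_mul]
    have h2 : (K - t) * e (t - 1) ≤ ∑ j ∈ Finset.Ico t K, e j := by
      calc (K - t) * e (t-1) = (Finset.Ico t K).card • e (t-1) := by
            simp [Nat.card_Ico, smul_eq_mul]
        _ ≤ ∑ j ∈ Finset.Ico t K, e j :=
            Finset.card_nsmul_le_sum _ _ _ (fun j hj => hmono (t-1) j (by
              simp [Finset.mem_Ico] at hj; omega))
    have hsplit : ∑ j ∈ Finset.range K, e j =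
        ∑ j ∈ Finset.range t, e j + ∑ j ∈ Finset.Ico t K, e j := by
      rw [Finset.range_eq_Ico, Finset.range_eq_Ico]
      exact (Finset.sum_Ico_consecutive e (Nat.zero_le t) ht).symm
    calc K * ∑ j ∈ Finset.range t, e j
        = t * ∑ j ∈ Finset.range t, e j + (K - t) * ∑ j ∈ Finset.range t, e j := by
          rw [← Nat.add_mul]; congr 1; omega
      _ ≤ t * ∑ j ∈ Finset.range t, e j + (K - t) * (t * e (t-1)) :=
          Nat.add_le_add_left (Nat.mul_le_mul_left _ h1) _
      _ = t * ∑ j ∈ Finset.range t, e j + t * ((K - t) * e (t-1)) := by ring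
      _ ≤ t * ∑ j ∈ Finset.range t, e j + t * ∑ j ∈ Finset.Ico t K, e j :=
          Nat.add_le_add_left (Nat.mul_le_mul_left _ h2) _
      _ = t * ∑ j ∈ Finset.range K, e j := by rw [hsplit, Nat.mul_add]
  calc K * ((P-K).choose K + ∑ j ∈ Finset.range t, e j) + t * (P-K).choose K
      = K * (P-K).choose K + t * (P-K).choose K + K * ∑ j ∈ Finset.range t, e j := by ring
    _ ≤ K * (P-K).choose K + t * (P-K).choose K + t * ∑ j ∈ Finset.range K, e j :=
        Nat.add_le_add_left key _
    _ = K * (P-K).choose K + t * ((P-K).choose K + ∑ j ∈ Finset.range K, e j) := by ring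


lemma sq_sum_ge {ι : Type*} (s : Finset ι) (a : ι → ℝ) (h0 : ∀ i, 0 ≤ a i) :
    ∑ i ∈ s, (a i)^2 ≤ (∑ i ∈ s, a i)^2 := by
  have h : ∀ i ∈ s, (a i)^2 ≤ a i * ∑ j ∈ s, a j := by
    intro i hi
    rw [sq]
    exact mul_le_mul_of_nonneg_left
      (Finset.single_le_sum (fun j _ => h0 j) hi) (h0 i)
  calc ∑ i ∈ s, (a i)^2 ≤ ∑ i ∈ s, a i * ∑ j ∈ s, a j := Finset.sum_le_sum h
    _ = (∑ i ∈ s, a i)^2 := by rw [← Finset.sum_mul, sq]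

lemma bonf1 {ι : Type*} (a : ι → ℝ) (h0 : ∀ i, 0 ≤ a i) (h1 : ∀ i, a i ≤ 1)
    (s : Finset ι) :
    ∏ i ∈ s, (1 - a i) ≤ 1 - ∑ i ∈ s, a i + ((∑ i ∈ s, a i)^2 - ∑ i ∈ s, (a i)^2)/2 := by
  classical
  induction s using Finset.cons_induction with
  | empty => simp
  | cons k t hk ih =>
    rw [Finset.prod_cons, Finset.sum_cons, Finset.sum_cons]
    skip
    have hQ : ∑ i ∈ t, (a i)^2 ≤ (∑ i ∈ t, a i)^2 := sq_sum_ge t a h0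
    have step : (1 - a k) * ∏ i ∈ t, (1 - a i) ≤
        (1 - a k) * (1 - ∑ i ∈ t, a i + ((∑ i ∈ t, a i)^2 - ∑ i ∈ t, (a i)^2)/2) :=
      mul_le_mul_of_nonneg_left ih (by linarith [h1 k])
    refine step.trans ?_
    nlinarith [h0 k, hQ]

lemma pair_id (m : ℕ) (a : Fin m → ℝ) :
    ∑ e ∈ Finset.univ.filter (fun e : Fin m × Fin m => e.1 < e.2), a e.1 * a e.2 =
      ((∑ i, a i)^2 - ∑ i, (a i)^2)/2 := by
  classical
  set f : Fin m × Fin m → ℝ := fun e => a e.1 * a e.2 with hf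
  have htot : ∑ e : Fin m × Fin m, f e = (∑ i, a i)^2 := by
    rw [sq, Finset.sum_mul_sum]
    rw [← Finset.sum_product']
    rfl
  have hsplit1 : ∑ e : Fin m × Fin m, f e =
      ∑ e ∈ Finset.univ.filter (fun e : Fin m × Fin m => e.1 < e.2), f e +
      ∑ e ∈ Finset.univ.filter (fun e : Fin m × Fin m => ¬ e.1 < e.2), f e :=
    (Finset.sum_filter_add_sum_filter_not _ _ _).symm
  have hsplit2 : ∑ e ∈ Finset.univ.filter (fun e : Fin m × Fin m => ¬ e.1 < e.2), f e =
      ∑ e ∈ Finset.univ.filter (fun e : Fin m × Fin m => e.2 < e.1), f e +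
      ∑ e ∈ Finset.univ.filter (fun e : Fin m × Fin m => e.1 = e.2), f e := by
    rw [← Finset.sum_filter_add_sum_filter_not
      (Finset.univ.filter (fun e : Fin m × Fin m => ¬ e.1 < e.2))
      (fun e => e.2 < e.1) f]
    congr 1
    · congr 1
      rw [Finset.filter_filter]
      apply Finset.filter_congr
      intro e _
      constructor
      · rintro ⟨h1, h2⟩; exact h2
      · intro h; exact ⟨not_lt_of_gt h, h⟩
    · congr 1
      rw [Finset.filter_filter]
      apply Finset.filter_congr
      intro e _
      constructor
      · rintro ⟨h1, h2⟩; omega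
      · intro h; omega
  have hswap : ∑ e ∈ Finset.univ.filter (fun e : Fin m × Fin m => e.2 < e.1), f e =
      ∑ e ∈ Finset.univ.filter (fun e : Fin m × Fin m => e.1 < e.2), f e := by
    apply Finset.sum_nbij' (fun e => Prod.swap e) (fun e => Prod.swap e)
    · intro e he; simp at he ⊢; exact he
    · intro e he; simp at he ⊢; exact he
    · intro e _; simp
    · intro e _; simp
    · intro e _; simp [hf, mul_comm]
  have hdiag : ∑ e ∈ Finset.univ.filter (fun e : Fin m × Fin m => e.1 = e.2), f e =
      ∑ i, (a i)^2 := by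
    apply Finset.sum_nbij' (fun e => e.1) (fun i => (i, i))
    · intro e he; simp
    · intro e he; simp
    · intro e he; simp at he; simp [Prod.ext_iff, he]
    · intro e _; simp
    · intro e he; simp at he; simp [hf, ← he, sq]
  rw [hsplit2, hswap, hdiag] at hsplit1
  rw [htot] at hsplit1
  linarith

lemma bonf (m : ℕ) (a : Fin m → ℝ) (h0 : ∀ i, 0 ≤ a i) (h1 : ∀ i, a i ≤ 1) :
    ∏ i, (1 - a i) ≤ 1 - ∑ i, a i +
      ∑ e ∈ Finset.univ.filter (fun e : Fin m × Fin m => e.1 < e.2), a e.1 * a e.2 := by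
  rw [pair_id]
  exact bonf1 a h0 h1 Finset.univ


theorem stmt8 (m K P : ℕ) (hm : 1 ≤ m) (hK : 1 ≤ K) (hP : 3 * K ≤ P)
    (p : ℝ) (hp0 : 0 ≤ p) (hp1 : p ≤ 1)
    (Sstar : Fin m → Finset (Fin P)) (hS : ∀ i, (Sstar i).card = K) :
    condProb m K P p
        (fun S B => ∀ i : Fin m, ¬ (B i = true ∧ (S ∩ Sstar i).Nonempty)) ≤
      Real.exp (-(m : ℝ) * (p * linkProb K P) + (m : ℝ) ^ 2 * (p * linkProb K P) ^ 2 +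
        (p * linkProb K P) * p / (K : ℝ) *
        (∑ e ∈ Finset.univ.filter (fun e : Fin m × Fin m => e.1 < e.2),
          ((Sstar e.1 ∩ Sstar e.2).card : ℝ))) := by
  classical
  have hKP : K ≤ P := by omega
  set C : ℝ := (P.choose K : ℝ) with hC
  set cK : ℝ := ((P - K).choose K : ℝ) with hcK
  have hCpos : (0:ℝ) < C := by
    rw [hC]; exact_mod_cast Nat.choose_pos hKP
  have hcK0 : (0:ℝ) ≤ cK := by positivity
  have hcKC : cK ≤ C := by
    rw [hC, hcK]; exact_mod_cast Nat.choose_le_choose K (Nat.sub_le P K)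
  set s : ℝ := linkProb K P with hsdef
  have hs_eq : s = 1 - cK / C := rfl
  have hCs : C * s = C - cK := by
    rw [hs_eq]; field_simp
  have hs0 : 0 ≤ s := by
    rw [hs_eq]; have : cK / C ≤ 1 := (div_le_one hCpos).mpr hcKC; linarith
  have hs1 : s ≤ 1 := by
    rw [hs_eq]; have : 0 ≤ cK / C := by positivity
    linarith
  set PK : Finset (Finset (Fin P)) := Finset.powersetCard K Finset.univ with hPK
  have hmem : ∀ S : Finset (Fin P), S ∈ PK ↔ S.card = K := by
    intro S; simp [hPK, Finset.mem_powersetCard]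
  have hcardPK : (PK.card : ℝ) = C := by
    rw [hPK, Finset.card_powersetCard]; simp [hC]
  set χ : Finset (Fin P) → Finset (Fin P) → ℝ :=
    fun S A => if (S ∩ A).Nonempty then 1 else 0 with hχ
  have hχ0 : ∀ S A, 0 ≤ χ S A := by
    intro S A; rw [hχ]; dsimp only; split <;> norm_num
  have hχ1 : ∀ S A, χ S A ≤ 1 := by
    intro S A; rw [hχ]; dsimp only; split <;> norm_num
  -- counting
  have misscount : ∀ A : Finset (Fin P),
      ((PK.filter (fun S => ¬ (S ∩ A).Nonempty)).card : ℝ) = ((P - A.card).choose K : ℝ) := by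
    intro A
    have heq : PK.filter (fun S => ¬ (S ∩ A).Nonempty) = Finset.powersetCard K Aᶜ := by
      ext S
      simp only [Finset.mem_filter, hmem, Finset.mem_powersetCard,
        Finset.not_nonempty_iff_eq_empty]
      constructor
      · rintro ⟨hc, hSA⟩
        refine ⟨?_, hc⟩
        intro x hx
        simp only [Finset.mem_compl]
        intro hxA
        have : x ∈ S ∩ A := Finset.mem_inter.mpr ⟨hx, hxA⟩
        rw [hSA] at this
        exact absurd this (Finset.notMem_empty x)
      · rintro ⟨hsub, hc⟩
        refine ⟨hc, ?_⟩
        rw [Finset.eq_empty_iff_forall_notMem]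
        intro x hx
        rcases Finset.mem_inter.mp hx with ⟨h1, h2⟩
        exact absurd h2 (Finset.mem_compl.mp (hsub h1))
    rw [heq, Finset.card_powersetCard, Finset.card_compl]
    simp
  have count : ∀ A : Finset (Fin P),
      ∑ S ∈ PK, χ S A = C - ((P - A.card).choose K : ℝ) := by
    intro A
    have h1 : ∑ S ∈ PK, χ S A
        = ((PK.filter (fun S => (S ∩ A).Nonempty)).card : ℝ) := by
      rw [hχ]
      dsimp only
      rw [Finset.sum_boole]
    have h2 := Finset.card_filter_add_card_filter_not
      (s := PK) (p := fun S => (S ∩ A).Nonempty)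
    have h3 : ((PK.filter (fun S => (S ∩ A).Nonempty)).card : ℝ)
        + ((PK.filter (fun S => ¬ (S ∩ A).Nonempty)).card : ℝ) = (PK.card : ℝ) := by
      have h4 := congrArg (fun n : ℕ => (n : ℝ)) h2
      push_cast at h4
      exact h4
    rw [h1]
    rw [misscount A] at h3
    linarith [hcardPK]
  have chi_mul : ∀ S A B : Finset (Fin P),
      χ S A * χ S B = χ S A + χ S B - χ S (A ∪ B) := by
    intro S A B
    have hu : (S ∩ (A ∪ B)).Nonempty ↔ (S ∩ A).Nonempty ∨ (S ∩ B).Nonempty := by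
      simp only [Finset.Nonempty, Finset.mem_inter, Finset.mem_union]
      constructor
      · rintro ⟨x, hxS, (h | h)⟩
        · exact Or.inl ⟨x, hxS, h⟩
        · exact Or.inr ⟨x, hxS, h⟩
      · rintro (⟨x, h1, h2⟩ | ⟨x, h1, h2⟩)
        · exact ⟨x, h1, Or.inl h2⟩
        · exact ⟨x, h1, Or.inr h2⟩
    rw [hχ]; dsimp only
    by_cases hA : (S ∩ A).Nonempty <;> by_cases hB : (S ∩ B).Nonempty <;>
      simp [hA, hB, hu] <;> ring
  have count2 : ∀ A B : Finset (Fin P),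
      ∑ S ∈ PK, χ S A * χ S B =
        (C - ((P - A.card).choose K : ℝ)) + (C - ((P - B.card).choose K : ℝ))
          - (C - ((P - (A ∪ B).card).choose K : ℝ)) := by
    intro A B
    calc ∑ S ∈ PK, χ S A * χ S B
        = ∑ S ∈ PK, (χ S A + χ S B - χ S (A ∪ B)) :=
          Finset.sum_congr rfl (fun S _ => chi_mul S A B)
      _ = (∑ S ∈ PK, χ S A) + (∑ S ∈ PK, χ S B) - ∑ S ∈ PK, χ S (A ∪ B) := by
          rw [Finset.sum_sub_distrib, Finset.sum_add_distrib]
      _ = _ := by rw [count A, count B, count (A ∪ B)]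
  -- per-pair bound
  have pair : ∀ i j : Fin m,
      ∑ S ∈ PK, χ S (Sstar i) * χ S (Sstar j) ≤
        C * (s^2 + s / K * ((Sstar i ∩ Sstar j).card : ℝ)) := by
    intro i j
    set t : ℕ := (Sstar i ∩ Sstar j).card with htdef
    have ht : t ≤ K := by
      rw [htdef, ← hS i]
      exact Finset.card_le_card Finset.inter_subset_left
    have hu : (Sstar i ∪ Sstar j).card = 2*K - t := by
      have := Finset.card_union_add_card_inter (Sstar i) (Sstar j)
      rw [hS i, hS j, ← htdef] at this
      omega
    have n1 : (P - (2*K - t)).choose K * P.choose K ≤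
        (P - K).choose K * (P - (K - t)).choose K := by
      have h := prod_ineq P K (K - t) K (by omega)
      rwa [show P - K - (K - t) = P - (2*K - t) by omega] at h
    have n2 := chord P K t hK ht hKP
    rw [show P - K + t = P - (K - t) by omega] at n2
    set g2 : ℝ := ((P - (2*K - t)).choose K : ℝ) with hg2
    set cKt : ℝ := ((P - (K - t)).choose K : ℝ) with hcKt
    have f1 : g2 * C ≤ cK * cKt := by
      rw [hg2, hC, hcK, hcKt]; exact_mod_cast n1
    have f2 : (K:ℝ) * cKt + t * cK ≤ K * cK + t * C := by
      rw [hcK, hcKt, hC]; exact_mod_cast n2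
    have hKpos : (0:ℝ) < K := by exact_mod_cast hK
    have htnn : (0:ℝ) ≤ t := Nat.cast_nonneg t
    have f2' : (K:ℝ) * cKt ≤ K * cK + t * (C - cK) := by linarith
    have cleared : g2 * C * K ≤ K * cK^2 + t * C * (C - cK) := by
      have step2 : cK * (C - cK) ≤ C * (C - cK) :=
        mul_le_mul_of_nonneg_right hcKC (by linarith)
      calc g2 * C * K = (g2 * C) * K := by ring
        _ ≤ (cK * cKt) * K := mul_le_mul_of_nonneg_right f1 hKpos.le
        _ = cK * ((K:ℝ) * cKt) := by ring
        _ ≤ cK * ((K:ℝ) * cK + t * (C - cK)) := mul_le_mul_of_nonneg_left f2' hcK0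
        _ = K * cK^2 + t * (cK * (C - cK)) := by ring
        _ ≤ K * cK^2 + t * (C * (C - cK)) := by
            have := mul_le_mul_of_nonneg_left step2 htnn
            linarith
        _ = K * cK^2 + t * C * (C - cK) := by ring
    rw [count2, hS i, hS j, hu]
    rw [← hg2, ← hcK]
    rw [← sub_nonneg]
    have expand : C * (s^2 + s / K * (t:ℝ)) -
        ((C - cK) + (C - cK) - (C - g2)) =
        (K * cK^2 + t * C * (C - cK) - g2 * C * K) / (C * K) := by
      rw [hs_eq]; field_simp; ring
    rw [expand]
    apply div_nonneg
    · linarith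
    · positivity
  -- simplify condProb
  have hcond : condProb m K P p
      (fun S B => ∀ i : Fin m, ¬ (B i = true ∧ (S ∩ Sstar i).Nonempty)) =
      (1 / C) * ∑ S ∈ PK, ∏ i, (1 - p * χ S (Sstar i)) := by
    unfold condProb
    congr 1
    refine Eq.trans (Finset.sum_congr rfl fun Ssub _ => ?_)
      (Finset.sum_subtype PK hmem (fun S => ∏ i, (1 - p * χ S (Sstar i)))).symm
    obtain ⟨S, hScard⟩ := Ssub
    simp only []
    have key : (∑ B : Fin m → Bool,
          ((∏ i : Fin m, if B i then p else 1 - p) *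
            (if (∀ i : Fin m, ¬ (B i = true ∧ (S ∩ Sstar i).Nonempty)) then (1:ℝ) else 0))) =
        ∏ i, (1 - p * χ S (Sstar i)) := by
      have hind : ∀ B : Fin m → Bool,
          (if (∀ i : Fin m, ¬ (B i = true ∧ (S ∩ Sstar i).Nonempty)) then (1:ℝ) else 0) =
          ∏ i, (if ¬ (B i = true ∧ (S ∩ Sstar i).Nonempty) then (1:ℝ) else 0) := by
        intro B
        by_cases h : ∀ i : Fin m, ¬ (B i = true ∧ (S ∩ Sstar i).Nonempty)
        · rw [if_pos h, eq_comm]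
          apply Finset.prod_eq_one
          intro i _
          rw [if_pos (h i)]
        · push_neg at h
          obtain ⟨i, hi⟩ := h
          rw [if_neg (by push_neg; exact ⟨i, hi⟩)]
          rw [eq_comm]
          apply Finset.prod_eq_zero (Finset.mem_univ i)
          rw [if_neg (by push_neg; exact hi)]
      calc ∑ B : Fin m → Bool,
            ((∏ i : Fin m, if B i then p else 1 - p) *
              (if (∀ i : Fin m, ¬ (B i = true ∧ (S ∩ Sstar i).Nonempty)) then (1:ℝ) else 0))
          = ∑ B : Fin m → Bool, ∏ i : Fin m,
              ((if B i then p else 1 - p) *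
                (if ¬ (B i = true ∧ (S ∩ Sstar i).Nonempty) then (1:ℝ) else 0)) := by
            apply Finset.sum_congr rfl
            intro B _
            rw [hind B, ← Finset.prod_mul_distrib]
        _ = ∏ i : Fin m, ∑ b : Bool,
              ((if b then p else 1 - p) *
                (if ¬ (b = true ∧ (S ∩ Sstar i).Nonempty) then (1:ℝ) else 0)) := by
            rw [Fintype.prod_sum]
        _ = ∏ i, (1 - p * χ S (Sstar i)) := by
            apply Finset.prod_congr rfl
            intro i _
            rw [Fintype.sum_bool]
            by_cases h : (S ∩ Sstar i).Nonempty
            · simp [h, hχ]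
            · simp [h, hχ]
    convert key using 4
  -- assemble
  set T : Finset (Fin m × Fin m) :=
    Finset.univ.filter (fun e : Fin m × Fin m => e.1 < e.2) with hT
  set Tsum : ℝ := ∑ e ∈ T, ((Sstar e.1 ∩ Sstar e.2).card : ℝ) with hTsum
  have hTsum0 : 0 ≤ Tsum := Finset.sum_nonneg (fun e _ => Nat.cast_nonneg _)
  have hTcard : (T.card : ℝ) ≤ (m:ℝ)^2 := by
    have h1 : T.card ≤ m * m := by
      calc T.card ≤ (Finset.univ : Finset (Fin m × Fin m)).card := Finset.card_filter_le _ _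
        _ = m * m := by simp
    calc (T.card : ℝ) ≤ ((m * m : ℕ) : ℝ) := by exact_mod_cast h1
      _ = (m:ℝ)^2 := by push_cast; ring
  set R : ℝ := -(m : ℝ) * (p * s) + (m : ℝ) ^ 2 * (p * s) ^ 2 +
      (p * s) * p / (K : ℝ) * Tsum with hR
  have step1 : ∑ S ∈ PK, ∏ i, (1 - p * χ S (Sstar i)) ≤ C * (1 + R) := by
    have bonfS : ∀ S ∈ PK, ∏ i, (1 - p * χ S (Sstar i)) ≤
        1 - (∑ i, p * χ S (Sstar i)) +
          ∑ e ∈ T, (p * χ S (Sstar e.1)) * (p * χ S (Sstar e.2)) := by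
      intro S _
      exact bonf m (fun i => p * χ S (Sstar i))
        (fun i => mul_nonneg hp0 (hχ0 S _))
        (fun i => mul_le_one₀ hp1 (hχ0 S _) (hχ1 S _))
    have hmid : ∑ S ∈ PK, (1 - (∑ i, p * χ S (Sstar i)) +
          ∑ e ∈ T, (p * χ S (Sstar e.1)) * (p * χ S (Sstar e.2))) =
        C - p * m * (C - cK) + ∑ e ∈ T, p^2 * (∑ S ∈ PK, χ S (Sstar e.1) * χ S (Sstar e.2)) := by
      rw [Finset.sum_add_distrib, Finset.sum_sub_distrib]
      congr 1
      · congr 1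
        · rw [Finset.sum_const, nsmul_eq_mul, hcardPK, mul_one]
        · rw [Finset.sum_comm]
          have : ∀ i : Fin m, ∑ S ∈ PK, p * χ S (Sstar i) = p * (C - cK) := by
            intro i
            rw [← Finset.mul_sum, count (Sstar i), hS i]
          rw [Finset.sum_congr rfl (fun i _ => this i), Finset.sum_const,
            Finset.card_univ, Fintype.card_fin, nsmul_eq_mul]
          ring
      · rw [Finset.sum_comm]
        apply Finset.sum_congr rfl
        intro e _
        rw [Finset.mul_sum]
        apply Finset.sum_congr rfl
        intro S _
        ring
    have hfinal : C - p * m * (C - cK) +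
        ∑ e ∈ T, p^2 * (∑ S ∈ PK, χ S (Sstar e.1) * χ S (Sstar e.2)) ≤ C * (1 + R) := by
      have hbd : ∑ e ∈ T, p^2 * (∑ S ∈ PK, χ S (Sstar e.1) * χ S (Sstar e.2)) ≤
          ∑ e ∈ T, p^2 * (C * (s^2 + s / K * ((Sstar e.1 ∩ Sstar e.2).card : ℝ))) :=
        Finset.sum_le_sum (fun e _ =>
          mul_le_mul_of_nonneg_left (pair e.1 e.2) (sq_nonneg p))
      have hsum : ∑ e ∈ T, p^2 * (C * (s^2 + s / K * ((Sstar e.1 ∩ Sstar e.2).card : ℝ))) =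
          (T.card : ℝ) * (p^2 * C * s^2) + p^2 * C * s / K * Tsum := by
        calc ∑ e ∈ T, p^2 * (C * (s^2 + s / K * ((Sstar e.1 ∩ Sstar e.2).card : ℝ)))
            = ∑ e ∈ T, (p^2 * C * s^2 + p^2 * C * s / K * ((Sstar e.1 ∩ Sstar e.2).card : ℝ)) :=
              Finset.sum_congr rfl (fun e _ => by ring)
          _ = (T.card : ℝ) * (p^2 * C * s^2) + p^2 * C * s / K * Tsum := by
              rw [Finset.sum_add_distrib, Finset.sum_const, nsmul_eq_mul, ← Finset.mul_sum,
                ← hTsum]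
      have e1 : p * m * (C - cK) = C * ((m:ℝ) * (p*s)) := by rw [← hCs]; ring
      have e2 : (T.card:ℝ) * (p^2*C*s^2) ≤ (m:ℝ)^2 * (p^2*C*s^2) :=
        mul_le_mul_of_nonneg_right hTcard (by positivity)
      have e3 : p^2*C*s/K*Tsum = C*((p*s)*p/K*Tsum) := by ring
      have eR : C * (1 + R) = C - C*((m:ℝ)*(p*s)) + (m:ℝ)^2*(p^2*C*s^2)
          + C*((p*s)*p/K*Tsum) := by
        rw [hR]; ring
      have hX := hbd.trans_eq hsum
      calc C - p * ↑m * (C - cK) +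
          ∑ e ∈ T, p^2 * (∑ S ∈ PK, χ S (Sstar e.1) * χ S (Sstar e.2))
          ≤ C - p * ↑m * (C - cK) + ((T.card : ℝ) * (p^2 * C * s^2) + p^2 * C * s / K * Tsum) := by
            linarith [hX]
        _ ≤ C - p * ↑m * (C - cK) + ((m:ℝ)^2 * (p^2 * C * s^2) + p^2 * C * s / K * Tsum) := by
            linarith [e2]
        _ = C * (1 + R) := by
            rw [eR]
            linarith [e1, e3]
    calc ∑ S ∈ PK, ∏ i, (1 - p * χ S (Sstar i))
        ≤ ∑ S ∈ PK, (1 - (∑ i, p * χ S (Sstar i)) +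
            ∑ e ∈ T, (p * χ S (Sstar e.1)) * (p * χ S (Sstar e.2))) :=
          Finset.sum_le_sum bonfS
      _ = C - p * m * (C - cK) + ∑ e ∈ T, p^2 * (∑ S ∈ PK, χ S (Sstar e.1) * χ S (Sstar e.2)) := hmid
      _ ≤ C * (1 + R) := hfinal
  have : condProb m K P p
      (fun S B => ∀ i : Fin m, ¬ (B i = true ∧ (S ∩ Sstar i).Nonempty)) ≤ 1 + R := by
    rw [hcond]
    calc (1 / C) * ∑ S ∈ PK, ∏ i, (1 - p * χ S (Sstar i))
        ≤ (1 / C) * (C * (1 + R)) :=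
          mul_le_mul_of_nonneg_left step1 (by positivity)
      _ = 1 + R := by field_simp
  exact this.trans (by linarith [Real.add_one_le_exp R])
end

section
/- In the conditional one-node model, for any integer h ≥ 0, writing r_i for the probability that E_i occurs while E_j does not occur for every j ≠ i, one has Π_{i=1}^{m} r_i^h ≥ q^{h·m}·(1 − 2·h·m²·q − (2·h·p/K)·Σ_{1≤i<j≤m} |S_i* ∩ S_j*|). -/
open Finset

private lemma nat_ratio (n K : ℕ) (h : 1 ≤ n) :
    n * (n-1).choose K = n.choose K * (n - K) := by
  obtain ⟨n', rfl⟩ : ∃ n', n = n' + 1 := ⟨n - 1, by omega⟩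
  simpa using (Nat.add_one_mul_choose_eq n' K).trans (Nat.choose_succ_right_eq (n'+1) K)

private lemma ratio_step (n K : ℕ) (h : K + 1 ≤ n) :
    ((n-1).choose K : ℝ) / (n.choose K : ℝ) = ((n:ℝ) - K) / (n:ℝ) := by
  have hpos : (0:ℝ) < (n.choose K : ℝ) := by
    exact_mod_cast Nat.choose_pos (by omega)
  have hn : (0:ℝ) < (n:ℝ) := by exact_mod_cast (by omega : 0 < n)
  have hcast : (n:ℝ) * ((n-1).choose K : ℝ) = (n.choose K : ℝ) * ((n:ℝ) - K) := by
    have h2 : ((n * (n-1).choose K : ℕ) : ℝ) = ((n.choose K * (n - K) : ℕ) : ℝ) := by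
      exact_mod_cast congrArg (Nat.cast (R := ℝ)) (nat_ratio n K (by omega))
    push_cast [Nat.cast_sub (show K ≤ n by omega)] at h2
    linarith
  field_simp
  linarith [hcast]

private lemma ratio_prod (K : ℕ) : ∀ (a n : ℕ), a + K ≤ n →
    ((n - a).choose K : ℝ) / (n.choose K : ℝ)
      = ∏ j ∈ range a, (((n:ℝ) - K - j) / ((n:ℝ) - j)) := by
  intro a
  induction a with
  | zero => intro n h; simp [div_self (show ((n.choose K : ℝ)) ≠ 0 by
      exact_mod_cast (Nat.choose_pos (by omega)).ne')]
  | succ a ih =>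
    intro n h
    have hm : K + 1 ≤ n - a := by omega
    have e1 : n - (a+1) = (n - a) - 1 := by omega
    have hcast : (((n - a : ℕ)) : ℝ) = (n:ℝ) - a := by
      push_cast [Nat.cast_sub (show a ≤ n by omega)]; ring
    have h2 : ((n - (a+1)).choose K : ℝ) / (((n-a)).choose K : ℝ)
        = ((n:ℝ) - K - a) / ((n:ℝ) - a) := by
      rw [e1, ratio_step (n-a) K hm, hcast]; ring_nf
    rw [prod_range_succ, ← ih n (by omega)]
    have hz1 : ((n.choose K : ℝ)) ≠ 0 := by
      exact_mod_cast (Nat.choose_pos (by omega : K ≤ n)).ne'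
    have hz2 : (((n-a).choose K : ℝ)) ≠ 0 := by
      exact_mod_cast (Nat.choose_pos (by omega : K ≤ n - a)).ne'
    rw [← h2]
    field_simp

private lemma avg_lemma (K t : ℕ) (ht : t ≤ K) (d : ℕ → ℝ)
    (hmono : ∀ i j, i ≤ j → j < K → d j ≤ d i)
    (hnn : ∀ j, j < K → 0 ≤ d j) :
    (K:ℝ) * ∑ j ∈ Ico (K-t) K, d j ≤ (t:ℝ) * ∑ j ∈ range K, d j := by
  rcases Nat.eq_zero_or_pos t with rfl | htpos
  · simp
  have hKt : K - t < K := by omega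
  have h1 : ∑ j ∈ Ico (K-t) K, d j ≤ (t:ℝ) * d (K-t) := by
    calc ∑ j ∈ Ico (K-t) K, d j ≤ ∑ j ∈ Ico (K-t) K, d (K-t) := by
          apply Finset.sum_le_sum
          intro j hj
          rw [Finset.mem_Ico] at hj
          exact hmono (K-t) j hj.1 hj.2
      _ = (t:ℝ) * d (K-t) := by
          rw [Finset.sum_const, Nat.card_Ico]
          have : K - (K - t) = t := by omega
          rw [this]; simp [mul_comm]
  have h2 : ((K-t : ℕ):ℝ) * d (K-t) ≤ ∑ j ∈ range (K-t), d j := by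
    calc ((K-t:ℕ):ℝ) * d (K-t) = ∑ _j ∈ range (K-t), d (K-t) := by
          rw [Finset.sum_const, card_range]; simp [mul_comm]
      _ ≤ ∑ j ∈ range (K-t), d j := by
          apply Finset.sum_le_sum
          intro j hj
          rw [Finset.mem_range] at hj
          exact hmono j (K-t) (by omega) hKt
  have hsplit : ∑ j ∈ range K, d j = ∑ j ∈ range (K-t), d j + ∑ j ∈ Ico (K-t) K, d j := by
    rw [Finset.range_eq_Ico, ← Finset.sum_Ico_consecutive d (by omega : 0 ≤ K - t) (by omega : K - t ≤ K)]
    rw [Finset.range_eq_Ico]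
  have hcast : (K:ℝ) = ((K-t:ℕ):ℝ) + (t:ℝ) := by push_cast [Nat.cast_sub ht]; ring
  have hsnn : 0 ≤ ∑ j ∈ Ico (K-t) K, d j := by
    apply Finset.sum_nonneg; intro j hj; rw [Finset.mem_Ico] at hj; exact hnn j hj.2
  nlinarith [mul_le_mul_of_nonneg_left h1 (show (0:ℝ) ≤ ((K-t:ℕ):ℝ) by positivity),
    mul_le_mul_of_nonneg_left h2 (show (0:ℝ) ≤ (t:ℝ) by positivity)]

private lemma mono_of_adj (K : ℕ) (d : ℕ → ℝ)
    (hadj : ∀ j, j+1 < K → d (j+1) ≤ d j) :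
    ∀ i j, i ≤ j → j < K → d j ≤ d i := by
  intro i j hij hj
  induction j with
  | zero => cases Nat.le_zero.mp hij; exact le_refl _
  | succ n ih =>
    rcases Nat.eq_or_lt_of_le hij with rfl | hlt
    · exact le_refl _
    · exact le_trans (hadj n hj) (ih (by omega) (by omega))

set_option maxHeartbeats 2000000 in
private lemma main_comb (K P t : ℕ) (hK : 1 ≤ K) (hP : 3*K ≤ P) (ht : t ≤ K) :
    ((P - (2*K - t)).choose K : ℝ)/(P.choose K : ℝ)
      ≤ (((P-K).choose K : ℝ)/(P.choose K : ℝ))^2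
        + (t:ℝ)/(K:ℝ) * (1 - ((P-K).choose K : ℝ)/(P.choose K : ℝ)) := by
  have hKR : (0:ℝ) < K := by exact_mod_cast hK
  have hPR : (3:ℝ)*K ≤ P := by exact_mod_cast hP
  set M : ℕ → ℝ := fun a => ((P - a).choose K : ℝ)/(P.choose K : ℝ) with hM
  have hchoosePos : (0:ℝ) < (P.choose K : ℝ) := by
    exact_mod_cast Nat.choose_pos (by omega : K ≤ P)
  have hMnn : ∀ a, 0 ≤ M a := by
    intro a; apply div_nonneg (by positivity) hchoosePos.le
  have hMf : ∀ a, a + K ≤ P → M a = ∏ j ∈ range a, (((P:ℝ) - K - j) / ((P:ℝ) - j)) :=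
    fun a ha => ratio_prod K a P ha
  -- single step recurrence
  have hMstep : ∀ j, j + 1 + K ≤ P → M (j+1) = M j * (((P:ℝ) - K - j) / ((P:ℝ) - j)) := by
    intro j hj
    rw [hMf (j+1) hj, hMf j (by omega), prod_range_succ]
  -- pool monotonicity: M (2K - t) ≤ M (K-t) * M K
  have hpool : M (2*K - t) ≤ M (K - t) * M K := by
    set n' : ℕ := P - (K - t) with hn'
    have hn2K : 2*K ≤ n' := by omega
    have hX : ((n' - K).choose K : ℝ)/(n'.choose K : ℝ)
        = ∏ j ∈ range K, (((n':ℝ) - K - j) / ((n':ℝ) - j)) := ratio_prod K K n' (by omega)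
    have hXle : ((n' - K).choose K : ℝ)/(n'.choose K : ℝ) ≤ M K := by
      rw [hX, hMf K (by omega)]
      apply Finset.prod_le_prod
      · intro j hj
        rw [mem_range] at hj
        apply div_nonneg
        · have : (j:ℝ) < K := by exact_mod_cast hj
          have : ((n':ℕ):ℝ) ≥ 2*K := by exact_mod_cast hn2K
          nlinarith
        · have : (j:ℝ) < K := by exact_mod_cast hj
          have : ((n':ℕ):ℝ) ≥ 2*K := by exact_mod_cast hn2K
          nlinarith
      · intro j hj
        rw [mem_range] at hj
        have hjK : (j:ℝ) < K := by exact_mod_cast hj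
        have hn'R : ((n':ℕ):ℝ) ≥ 2*K := by exact_mod_cast hn2K
        have hn'P : ((n':ℕ):ℝ) ≤ P := by exact_mod_cast (by omega : n' ≤ P)
        rw [div_le_div_iff₀ (by nlinarith) (by nlinarith)]
        nlinarith
    have hne : ((n'.choose K : ℕ):ℝ) ≠ 0 := by
      exact_mod_cast (Nat.choose_pos (by omega : K ≤ n')).ne'
    have hsplit : M (2*K - t) = (((n' - K).choose K : ℝ)/(n'.choose K : ℝ)) * M (K - t) := by
      have e1 : P - (2*K - t) = n' - K := by omega
      show ((P - (2*K-t)).choose K : ℝ)/(P.choose K : ℝ) = _ * (((P - (K-t)).choose K : ℝ)/(P.choose K : ℝ))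
      rw [e1, ← hn']
      field_simp
    rw [hsplit, mul_comm]
    exact mul_le_mul_of_nonneg_left hXle (hMnn _)
  -- decreasing increments
  set d : ℕ → ℝ := fun j => M j - M (j+1) with hd
  have hdval : ∀ j, j < K → d j = M j * ((K:ℝ) / ((P:ℝ) - j)) := by
    intro j hj
    have hPj : (0:ℝ) < (P:ℝ) - j := by
      have : (j:ℝ) < K := by exact_mod_cast hj
      nlinarith
    have := hMstep j (by omega)
    show M j - M (j+1) = _
    rw [this]
    field_simp
    ring
  have hdnn : ∀ j, j < K → 0 ≤ d j := by
    intro j hj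
    rw [hdval j hj]
    have hPj : (0:ℝ) < (P:ℝ) - j := by
      have : (j:ℝ) < K := by exact_mod_cast hj
      nlinarith
    positivity
  have hdadj : ∀ j, j + 1 < K → d (j+1) ≤ d j := by
    intro j hj
    have hjK : (j:ℝ) + 1 < K := by exact_mod_cast hj
    have hPj : (0:ℝ) < (P:ℝ) - j := by nlinarith
    have hPj1 : (0:ℝ) < (P:ℝ) - (j+1) := by nlinarith
    rw [hdval j (by omega), hdval (j+1) (by omega), hMstep j (by omega)]
    have hcast : ((j:ℕ)+1 : ℝ) = ((j+1 : ℕ) : ℝ) := by push_cast; ring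
    have hfacnn : (0:ℝ) ≤ ((P:ℝ) - K - j) := by nlinarith
    have key : (((P:ℝ) - K - j) / ((P:ℝ) - j)) * ((K:ℝ) / ((P:ℝ) - ((j:ℝ)+1)))
        ≤ (K:ℝ) / ((P:ℝ) - j) := by
      rw [div_mul_div_comm, div_le_div_iff₀ (by positivity) hPj]
      nlinarith [mul_le_mul_of_nonneg_right
        (show (P:ℝ) - K - j ≤ (P:ℝ) - (j+1) by nlinarith)
        (show (0:ℝ) ≤ (K:ℝ) * ((P:ℝ) - j) by positivity)]
    calc M j * (((P:ℝ) - K - j) / ((P:ℝ) - j)) * ((K:ℝ) / ((P:ℝ) - ((j+1:ℕ):ℝ)))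
        = M j * ((((P:ℝ) - K - j) / ((P:ℝ) - j)) * ((K:ℝ) / ((P:ℝ) - ((j:ℝ)+1)))) := by
          push_cast; ring
      _ ≤ M j * ((K:ℝ) / ((P:ℝ) - j)) := mul_le_mul_of_nonneg_left key (hMnn j)
  -- telescopes
  have hM0 : M 0 = 1 := by
    show ((P - 0).choose K : ℝ)/(P.choose K : ℝ) = 1
    rw [Nat.sub_zero, div_self hchoosePos.ne']
  have htel1 : ∑ j ∈ range K, d j = 1 - M K := by
    rw [hd]
    rw [Finset.sum_range_sub' M K, hM0]
  have htel2 : ∑ j ∈ Ico (K-t) K, d j = M (K-t) - M K := by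
    rw [Finset.sum_Ico_eq_sub _ (by omega : K - t ≤ K), hd,
      Finset.sum_range_sub' M K, Finset.sum_range_sub' M (K-t), hM0]
    ring
  have havg := avg_lemma K t ht d (mono_of_adj K d hdadj) hdnn
  rw [htel1, htel2] at havg
  -- assemble
  have hu1 : M K ≤ 1 := by
    apply div_le_one_of_le₀ _ hchoosePos.le
    exact_mod_cast Nat.choose_le_choose K (by omega : P - K ≤ P)
  have hdiff : 0 ≤ M (K-t) - M K := by
    rw [← htel2]
    apply Finset.sum_nonneg
    intro j hj; rw [mem_Ico] at hj; exact hdnn j hj.2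
  have hstep2 : M (K - t) - M K ≤ (t:ℝ)/(K:ℝ) * (1 - M K) := by
    rw [div_mul_eq_mul_div, le_div_iff₀ hKR]
    linarith [havg]
  have h1 : M (K-t) * M K ≤ (M K)^2 + (M (K-t) - M K) := by
    nlinarith [mul_le_mul_of_nonneg_left hu1 hdiff]
  linarith [hpool, h1, hstep2]


private lemma sum_pi_bool (m : ℕ) (g : Fin m → Bool → ℝ) :
    ∑ B : Fin m → Bool, ∏ i, g i (B i) = ∏ i, (g i true + g i false) := by
  have := Finset.prod_univ_sum (fun _ : Fin m => (univ : Finset Bool)) (fun i b => g i b)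
  rw [Fintype.piFinset_univ] at this
  rw [← this]
  apply Finset.prod_congr rfl
  intro i _
  simp

private lemma sum_W_one (m : ℕ) (p : ℝ) :
    ∑ B : Fin m → Bool, ∏ k, (if B k then p else 1-p) = 1 := by
  rw [sum_pi_bool m (fun _ b => if b then p else 1-p)]
  simp

private lemma sum_W_single (m : ℕ) (p : ℝ) (i : Fin m) :
    ∑ B : Fin m → Bool, (∏ k, (if B k then p else 1-p)) * (if B i = true then (1:ℝ) else 0) = p := by
  have hpt : ∀ B : Fin m → Bool,
      (∏ k, (if B k then p else 1-p)) * (if B i = true then (1:ℝ) else 0)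
        = ∏ k, (if k = i then (if B k then p else 0) else (if B k then p else 1-p)) := by
    intro B
    rw [show (if B i = true then (1:ℝ) else 0)
        = ∏ k, (if k = i then (if B k = true then (1:ℝ) else 0) else 1) by
      rw [Finset.prod_ite_eq' univ i (fun k => if B k = true then (1:ℝ) else 0)]; simp]
    rw [← Finset.prod_mul_distrib]
    apply Finset.prod_congr rfl
    intro k _
    split_ifs <;> simp_all
  rw [Finset.sum_congr rfl (fun B _ => hpt B),
    sum_pi_bool m (fun k b => if k = i then (if b then p else 0) else (if b then p else 1-p))]
  calc ∏ k, ((if k = i then (if true = true then p else 0) else (if true = true then p else 1-p))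
        + (if k = i then (if false = true then p else 0) else (if false = true then p else 1-p)))
      = ∏ k, (if k = i then p else 1) := by
        apply Finset.prod_congr rfl; intro k _; by_cases hk : k = i <;> simp [hk]
    _ = p := by rw [Finset.prod_ite_eq' univ i (fun _ => p)]; simp

private lemma sum_W_pair (m : ℕ) (p : ℝ) (i j : Fin m) (hij : i ≠ j) :
    ∑ B : Fin m → Bool, (∏ k, (if B k then p else 1-p)) *
      ((if B i = true then (1:ℝ) else 0) * (if B j = true then (1:ℝ) else 0)) = p^2 := by
  have hfil : (univ : Finset (Fin m)).filter (fun k => k = i ∨ k = j) = {i, j} := by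
    ext k; simp [Finset.mem_insert]
  have hpt : ∀ B : Fin m → Bool,
      (∏ k, (if B k then p else 1-p)) *
        ((if B i = true then (1:ℝ) else 0) * (if B j = true then (1:ℝ) else 0))
      = ∏ k, (if k = i ∨ k = j then (if B k then p else 0) else (if B k then p else 1-p)) := by
    intro B
    have h1 : (if B i = true then (1:ℝ) else 0) * (if B j = true then (1:ℝ) else 0)
        = ∏ k, (if k = i ∨ k = j then (if B k = true then (1:ℝ) else 0) else 1) := by
      rw [← Finset.prod_filter, hfil, Finset.prod_pair hij]
    rw [h1, ← Finset.prod_mul_distrib]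
    apply Finset.prod_congr rfl
    intro k _
    split_ifs <;> simp_all
  rw [Finset.sum_congr rfl (fun B _ => hpt B),
    sum_pi_bool m (fun k b => if k = i ∨ k = j then (if b then p else 0) else (if b then p else 1-p))]
  calc ∏ k, ((if k = i ∨ k = j then (if true = true then p else 0) else (if true = true then p else 1-p))
        + (if k = i ∨ k = j then (if false = true then p else 0) else (if false = true then p else 1-p)))
      = ∏ k, (if k = i ∨ k = j then p else 1) := by
        apply Finset.prod_congr rfl; intro k _; by_cases hk : k = i ∨ k = j <;> simp [hk]
    _ = p^2 := by
      rw [← Finset.prod_filter, hfil, Finset.prod_pair hij]; ring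

private lemma count_miss (K P : ℕ) (A : Finset (Fin P)) :
    ∑ S ∈ powersetCard K (univ : Finset (Fin P)), (if (S ∩ A) = ∅ then (1:ℝ) else 0)
      = ((P - A.card).choose K : ℝ) := by
  rw [Finset.sum_boole]
  congr 1
  have heq : (powersetCard K (univ : Finset (Fin P))).filter (fun S => S ∩ A = ∅)
      = powersetCard K Aᶜ := by
    ext S
    rw [Finset.mem_filter, Finset.mem_powersetCard_univ, Finset.mem_powersetCard]
    constructor
    · rintro ⟨hc, he⟩
      refine ⟨?_, hc⟩
      intro x hx
      simp only [Finset.mem_compl]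
      intro hxA
      have : x ∈ S ∩ A := Finset.mem_inter.mpr ⟨hx, hxA⟩
      simp [he] at this
    · rintro ⟨hsub, hc⟩
      refine ⟨hc, ?_⟩
      rw [Finset.eq_empty_iff_forall_notMem]
      intro x hx
      rw [Finset.mem_inter] at hx
      exact (Finset.mem_compl.mp (hsub hx.1)) hx.2
  rw [heq, Finset.card_powersetCard, Finset.card_compl]
  simp

private lemma count_hit (K P : ℕ) (A : Finset (Fin P)) :
    ∑ S ∈ powersetCard K (univ : Finset (Fin P)), (if (S ∩ A).Nonempty then (1:ℝ) else 0)
      = (P.choose K : ℝ) - ((P - A.card).choose K : ℝ) := by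
  have hpt : ∀ S : Finset (Fin P), (if (S ∩ A).Nonempty then (1:ℝ) else 0)
      = 1 - (if S ∩ A = ∅ then (1:ℝ) else 0) := by
    intro S
    by_cases hx : (S ∩ A).Nonempty
    · simp [hx, Finset.nonempty_iff_ne_empty.mp hx]
    · simp [hx, Finset.not_nonempty_iff_eq_empty.mp hx]
  rw [Finset.sum_congr rfl (fun S _ => hpt S), Finset.sum_sub_distrib, count_miss K P A,
    Finset.sum_const, Finset.card_powersetCard, Finset.card_univ, Fintype.card_fin]
  simp

private lemma count_hit_both (K P : ℕ) (A B : Finset (Fin P)) :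
    ∑ S ∈ powersetCard K (univ : Finset (Fin P)),
      ((if (S ∩ A).Nonempty then (1:ℝ) else 0) * (if (S ∩ B).Nonempty then (1:ℝ) else 0))
      = (P.choose K : ℝ) - ((P - A.card).choose K : ℝ) - ((P - B.card).choose K : ℝ)
        + ((P - (A ∪ B).card).choose K : ℝ) := by
  have hpt : ∀ S : Finset (Fin P),
      (if (S ∩ A).Nonempty then (1:ℝ) else 0) * (if (S ∩ B).Nonempty then (1:ℝ) else 0)
      = 1 - (if S ∩ A = ∅ then (1:ℝ) else 0) - (if S ∩ B = ∅ then (1:ℝ) else 0)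
        + (if S ∩ (A ∪ B) = ∅ then (1:ℝ) else 0) := by
    intro S
    have hu : S ∩ (A ∪ B) = ∅ ↔ (S ∩ A = ∅ ∧ S ∩ B = ∅) := by
      rw [Finset.inter_union_distrib_left, Finset.union_eq_empty]
    by_cases h1 : S ∩ A = ∅ <;> by_cases h2 : S ∩ B = ∅ <;>
      simp [h1, h2, hu, Finset.nonempty_iff_ne_empty, Finset.not_nonempty_iff_eq_empty]
  rw [Finset.sum_congr rfl (fun S _ => hpt S)]
  rw [Finset.sum_add_distrib, Finset.sum_sub_distrib, Finset.sum_sub_distrib,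
    count_miss K P A, count_miss K P B, count_miss K P (A ∪ B),
    Finset.sum_const, Finset.card_powersetCard, Finset.card_univ, Fintype.card_fin]
  simp

private lemma weierstrass (m : ℕ) (x : Fin m → ℝ) (h0 : ∀ i, 0 ≤ x i) (h1 : ∀ i, x i ≤ 1) :
    1 - ∑ i, (1 - x i) ≤ ∏ i, x i := by
  have : ∀ s : Finset (Fin m), 1 - ∑ i ∈ s, (1 - x i) ≤ ∏ i ∈ s, x i := by
    intro s
    induction s using Finset.cons_induction with
    | empty => simp
    | cons a s ha ih =>
      rw [Finset.prod_cons, Finset.sum_cons]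
      have hs0 : 0 ≤ ∑ i ∈ s, (1 - x i) := Finset.sum_nonneg (fun i _ => by linarith [h1 i])
      have hp0 : 0 ≤ ∏ i ∈ s, x i := Finset.prod_nonneg (fun i _ => h0 i)
      by_cases hc : 1 - ∑ i ∈ s, (1 - x i) ≤ 0
      · nlinarith [h0 a, h1 a]
      · push_neg at hc
        nlinarith [h0 a, h1 a, mul_le_mul_of_nonneg_left ih (h0 a)]
  exact this univ

private lemma pair_sum (m : ℕ) (g : Fin m → Fin m → ℝ) (hsymm : ∀ i j, g i j = g j i) :
    ∑ i, ∑ j ∈ univ.erase i, g i j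
      = 2 * ∑ e ∈ univ.filter (fun e : Fin m × Fin m => e.1 < e.2), g e.1 e.2 := by
  have h1 : ∀ i : Fin m, ∑ j ∈ univ.erase i, g i j = ∑ j, if j ≠ i then g i j else 0 := by
    intro i
    rw [← Finset.sum_filter]
    congr 1
    ext j; simp [Finset.mem_erase]
  have h2 : ∑ i, ∑ j ∈ univ.erase i, g i j
      = ∑ e ∈ (univ : Finset (Fin m × Fin m)).filter (fun e => e.2 ≠ e.1), g e.1 e.2 := by
    rw [Finset.sum_filter, ← Finset.univ_product_univ, Finset.sum_product]
    exact Finset.sum_congr rfl (fun i _ => h1 i)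
  rw [h2]
  have h3 : (univ : Finset (Fin m × Fin m)).filter (fun e => e.2 ≠ e.1)
      = (univ.filter (fun e : Fin m × Fin m => e.1 < e.2)) ∪ (univ.filter (fun e : Fin m × Fin m => e.2 < e.1)) := by
    ext e
    simp only [Finset.mem_filter, Finset.mem_union, Finset.mem_univ, true_and]
    omega
  have hdisj : Disjoint (univ.filter (fun e : Fin m × Fin m => e.1 < e.2))
      (univ.filter (fun e : Fin m × Fin m => e.2 < e.1)) := by
    rw [Finset.disjoint_filter]
    intro e _ he
    omega
  rw [h3, Finset.sum_union hdisj]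
  have h4 : ∑ e ∈ univ.filter (fun e : Fin m × Fin m => e.2 < e.1), g e.1 e.2
      = ∑ e ∈ univ.filter (fun e : Fin m × Fin m => e.1 < e.2), g e.1 e.2 := by
    apply Finset.sum_nbij' (fun e => Prod.swap e) (fun e => Prod.swap e)
    · intro e he; simp only [Finset.mem_filter, Finset.mem_univ, true_and] at *; exact he
    · intro e he; simp only [Finset.mem_filter, Finset.mem_univ, true_and] at *; exact he
    · intro e _; simp
    · intro e _; simp
    · intro e _; exact hsymm e.1 e.2
  rw [h4]
  ring

set_option maxHeartbeats 2000000 in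
theorem stmt10 (m K P : ℕ) (hm : 1 ≤ m) (hK : 1 ≤ K) (hP : 3 * K ≤ P)
    (p : ℝ) (hp0 : 0 ≤ p) (hp1 : p ≤ 1)
    (Sstar : Fin m → Finset (Fin P)) (hS : ∀ i, (Sstar i).card = K) (h : ℕ)
    (r : Fin m → ℝ)
    (hr : ∀ i : Fin m,
      r i = condProb m K P p
        (fun S B => (B i = true ∧ (S ∩ Sstar i).Nonempty) ∧
          ∀ j : Fin m, j ≠ i → ¬ (B j = true ∧ (S ∩ Sstar j).Nonempty))) :
    (p * linkProb K P) ^ (h * m) *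
        (1 - 2 * (h : ℝ) * (m : ℝ) ^ 2 * (p * linkProb K P) -
          2 * (h : ℝ) * p / (K : ℝ) *
          (∑ e ∈ Finset.univ.filter (fun e : Fin m × Fin m => e.1 < e.2),
          ((Sstar e.1 ∩ Sstar e.2).card : ℝ))) ≤
      ∏ i : Fin m, (r i) ^ h := by
  classical
  have hKR : (0:ℝ) < (K:ℝ) := by exact_mod_cast hK
  have hCpos : (0:ℝ) < (P.choose K : ℝ) := by
    exact_mod_cast Nat.choose_pos (by omega : K ≤ P)
  set C : ℝ := (P.choose K : ℝ) with hC
  set u : ℝ := ((P - K).choose K : ℝ) / C with hu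
  have hsdef : linkProb K P = 1 - u := rfl
  have hu0 : 0 ≤ u := by positivity
  have hu1 : u ≤ 1 := by
    rw [hu]
    apply div_le_one_of_le₀ _ hCpos.le
    rw [hC]
    exact_mod_cast Nat.choose_le_choose K (by omega : P - K ≤ P)
  set s : ℝ := 1 - u with hsu
  have hs0 : 0 ≤ s := by rw [hsu]; linarith
  have hs1 : s ≤ 1 := by rw [hsu]; linarith
  set q : ℝ := p * s with hq
  have hq0 : 0 ≤ q := mul_nonneg hp0 hs0
  set t : Fin m → Fin m → ℝ := fun i j => ((Sstar i ∩ Sstar j).card : ℝ) with ht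
  have ht0 : ∀ i j, 0 ≤ t i j := fun i j => by positivity
  set δ : Fin m → ℝ := fun i => ∑ j ∈ univ.erase i, (p * s + p * t i j / K) with hδ
  have hδ0 : ∀ i, 0 ≤ δ i := by
    intro i
    apply Finset.sum_nonneg
    intro j _
    have := ht0 i j
    positivity
  -- the union-card bound
  have hCU : ∀ i j : Fin m, i ≠ j →
      ((P - (Sstar i ∪ Sstar j).card).choose K : ℝ) ≤ C * (u^2 + t i j / K * (1 - u)) := by
    intro i j hij
    have hicard : (Sstar i ∩ Sstar j).card ≤ K := by
      calc (Sstar i ∩ Sstar j).card ≤ (Sstar i).card := Finset.card_le_card inter_subset_left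
        _ = K := hS i
    have hucard : (Sstar i ∪ Sstar j).card = 2*K - (Sstar i ∩ Sstar j).card := by
      have := Finset.card_union_add_card_inter (Sstar i) (Sstar j)
      rw [hS i, hS j] at this
      omega
    have := main_comb K P ((Sstar i ∩ Sstar j).card) hK hP hicard
    rw [hucard]
    rw [div_le_iff₀ hCpos] at this
    calc ((P - (2*K - (Sstar i ∩ Sstar j).card)).choose K : ℝ)
        ≤ ((((P-K).choose K : ℝ)/(P.choose K : ℝ))^2
            + ((Sstar i ∩ Sstar j).card : ℝ)/(K:ℝ)
              * (1 - ((P-K).choose K : ℝ)/(P.choose K : ℝ))) * (P.choose K : ℝ) := this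
      _ = C * (u^2 + t i j / K * (1 - u)) := by simp only [ht]; ring
  set W : (Fin m → Bool) → ℝ := fun B => ∏ k, if B k then p else 1-p with hW
  have hW0 : ∀ B, 0 ≤ W B := by
    intro B
    apply Finset.prod_nonneg
    intro k _
    by_cases hb : B k <;> simp [hb] <;> linarith
  set E : Fin m → Finset (Fin P) → (Fin m → Bool) → ℝ :=
    fun j S B => if (B j = true ∧ (S ∩ Sstar j).Nonempty) then (1:ℝ) else 0 with hE
  have hE0 : ∀ j S B, 0 ≤ E j S B := by
    intro j S B; rw [hE]; dsimp only; split_ifs <;> norm_num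
  have hsub : ∀ f : Finset (Fin P) → ℝ,
      ∑ S : {S : Finset (Fin P) // S.card = K}, f S.1
        = ∑ S ∈ powersetCard K (univ : Finset (Fin P)), f S :=
    fun f => (Finset.sum_subtype _ (fun S => Finset.mem_powersetCard_univ) f).symm
  have hCm : ((P - K).choose K : ℝ) = C * u := by
    rw [hu]; field_simp
  -- value of the single-event sum
  have hval1 : ∀ i : Fin m,
      ∑ S : {S : Finset (Fin P) // S.card = K}, ∑ B : Fin m → Bool, W B * E i S.1 B
        = C * q := by
    intro i
    have hinner : ∀ S : Finset (Fin P),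
        ∑ B : Fin m → Bool, W B * E i S B
          = p * (if (S ∩ Sstar i).Nonempty then (1:ℝ) else 0) := by
      intro S
      have hpt : ∀ B : Fin m → Bool, W B * E i S B
          = (W B * (if B i = true then (1:ℝ) else 0)) * (if (S ∩ Sstar i).Nonempty then (1:ℝ) else 0) := by
        intro B
        rw [hE]; dsimp only
        by_cases h1 : B i = true <;> by_cases h2 : (S ∩ Sstar i).Nonempty <;>
          simp [h1, h2]
      rw [Finset.sum_congr rfl (fun B _ => hpt B), ← Finset.sum_mul, sum_W_single m p i]
    rw [Finset.sum_congr rfl (fun S _ => hinner S.1), hsub (fun S => p * (if (S ∩ Sstar i).Nonempty then (1:ℝ) else 0)),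
      ← Finset.mul_sum, count_hit K P (Sstar i), hS i, hCm]
    rw [hq, hsu]
    ring
  -- value of the pair-event sum
  have hval2 : ∀ i j : Fin m, i ≠ j →
      ∑ S : {S : Finset (Fin P) // S.card = K}, ∑ B : Fin m → Bool, W B * (E i S.1 B * E j S.1 B)
        = p^2 * (C - C*u - C*u + ((P - (Sstar i ∪ Sstar j).card).choose K : ℝ)) := by
    intro i j hij
    have hinner : ∀ S : Finset (Fin P),
        ∑ B : Fin m → Bool, W B * (E i S B * E j S B)
          = p^2 * ((if (S ∩ Sstar i).Nonempty then (1:ℝ) else 0) * (if (S ∩ Sstar j).Nonempty then (1:ℝ) else 0)) := by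
      intro S
      have hpt : ∀ B : Fin m → Bool, W B * (E i S B * E j S B)
          = (W B * ((if B i = true then (1:ℝ) else 0) * (if B j = true then (1:ℝ) else 0)))
            * ((if (S ∩ Sstar i).Nonempty then (1:ℝ) else 0) * (if (S ∩ Sstar j).Nonempty then (1:ℝ) else 0)) := by
        intro B
        rw [hE]; dsimp only
        by_cases h1 : B i = true <;> by_cases h2 : (S ∩ Sstar i).Nonempty <;>
          by_cases h3 : B j = true <;> by_cases h4 : (S ∩ Sstar j).Nonempty <;>
          simp [h1, h2, h3, h4]
      rw [Finset.sum_congr rfl (fun B _ => hpt B), ← Finset.sum_mul, sum_W_pair m p i j hij]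
    rw [Finset.sum_congr rfl (fun S _ => hinner S.1),
      hsub (fun S => p^2 * ((if (S ∩ Sstar i).Nonempty then (1:ℝ) else 0) * (if (S ∩ Sstar j).Nonempty then (1:ℝ) else 0))),
      ← Finset.mul_sum, count_hit_both K P (Sstar i) (Sstar j), hS i, hS j, hCm]
  -- lower bound for r i
  have hri : ∀ i : Fin m, q * (1 - δ i) ≤ r i := by
    intro i
    have hcond : r i = (1/C) * ∑ S : {S : Finset (Fin P) // S.card = K}, ∑ B : Fin m → Bool,
        (W B * (if ((B i = true ∧ (S.1 ∩ Sstar i).Nonempty)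
          ∧ ∀ j : Fin m, j ≠ i → ¬(B j = true ∧ (S.1 ∩ Sstar j).Nonempty)) then (1:ℝ) else 0)) := by
      rw [hr i]; unfold condProb; congr!
    have hpoint : ∀ (S : Finset (Fin P)) (B : Fin m → Bool),
        E i S B - ∑ j ∈ univ.erase i, E i S B * E j S B
          ≤ (if ((B i = true ∧ (S ∩ Sstar i).Nonempty)
              ∧ ∀ j : Fin m, j ≠ i → ¬(B j = true ∧ (S ∩ Sstar j).Nonempty)) then (1:ℝ) else 0) := by
      intro S B
      by_cases hev : ((B i = true ∧ (S ∩ Sstar i).Nonempty)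
          ∧ ∀ j : Fin m, j ≠ i → ¬(B j = true ∧ (S ∩ Sstar j).Nonempty))
      · rw [if_pos hev]
        have hEi : E i S B = 1 := by rw [hE]; dsimp only; rw [if_pos hev.1]
        have hzero : ∀ j ∈ univ.erase i, E i S B * E j S B = 0 := by
          intro j hj
          rw [Finset.mem_erase] at hj
          have : E j S B = 0 := by rw [hE]; dsimp only; rw [if_neg (hev.2 j hj.1)]
          rw [this, mul_zero]
        rw [Finset.sum_eq_zero hzero, hEi]
        norm_num
      · rw [if_neg hev]
        have hsum0 : 0 ≤ ∑ j ∈ univ.erase i, E i S B * E j S B :=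
          Finset.sum_nonneg (fun j _ => mul_nonneg (hE0 i S B) (hE0 j S B))
        by_cases hEi : (B i = true ∧ (S ∩ Sstar i).Nonempty)
        · push_neg at hev
          obtain ⟨j, hji, hj⟩ := hev hEi
          have hEi1 : E i S B = 1 := by rw [hE]; dsimp only; rw [if_pos hEi]
          have h1 : E i S B * E j S B = 1 := by
            rw [hEi1, one_mul, hE]; dsimp only; rw [if_pos hj]
          have hle : (1:ℝ) ≤ ∑ j ∈ univ.erase i, E i S B * E j S B := by
            rw [← h1]
            exact Finset.single_le_sum (f := fun k => E i S B * E k S B)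
              (fun k _ => mul_nonneg (hE0 i S B) (hE0 k S B))
              (Finset.mem_erase.mpr ⟨hji, Finset.mem_univ j⟩)
          linarith [hEi1, hle]
        · have hEi0 : E i S B = 0 := by rw [hE]; dsimp only; rw [if_neg hEi]
          linarith [hEi0, hsum0]
    have hlow1 : ∑ S : {S : Finset (Fin P) // S.card = K}, ∑ B : Fin m → Bool,
          W B * (E i S.1 B - ∑ j ∈ univ.erase i, E i S.1 B * E j S.1 B)
        ≤ ∑ S : {S : Finset (Fin P) // S.card = K}, ∑ B : Fin m → Bool,
          (W B * (if ((B i = true ∧ (S.1 ∩ Sstar i).Nonempty)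
            ∧ ∀ j : Fin m, j ≠ i → ¬(B j = true ∧ (S.1 ∩ Sstar j).Nonempty)) then (1:ℝ) else 0)) := by
      apply Finset.sum_le_sum
      intro S _
      apply Finset.sum_le_sum
      intro B _
      exact mul_le_mul_of_nonneg_left (hpoint S.1 B) (hW0 B)
    have hsplit : ∑ S : {S : Finset (Fin P) // S.card = K}, ∑ B : Fin m → Bool,
          W B * (E i S.1 B - ∑ j ∈ univ.erase i, E i S.1 B * E j S.1 B)
        = (∑ S : {S : Finset (Fin P) // S.card = K}, ∑ B : Fin m → Bool, W B * E i S.1 B)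
          - ∑ j ∈ univ.erase i, ∑ S : {S : Finset (Fin P) // S.card = K}, ∑ B : Fin m → Bool,
              W B * (E i S.1 B * E j S.1 B) := by
      simp only [mul_sub, Finset.mul_sum, Finset.sum_sub_distrib]
      congr 1
      calc ∑ S : {S : Finset (Fin P) // S.card = K}, ∑ B : Fin m → Bool, ∑ j ∈ univ.erase i,
              W B * (E i S.1 B * E j S.1 B)
          = ∑ S : {S : Finset (Fin P) // S.card = K}, ∑ j ∈ univ.erase i, ∑ B : Fin m → Bool,
              W B * (E i S.1 B * E j S.1 B) :=
            Finset.sum_congr rfl (fun S _ => Finset.sum_comm)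
        _ = ∑ j ∈ univ.erase i, ∑ S : {S : Finset (Fin P) // S.card = K}, ∑ B : Fin m → Bool,
              W B * (E i S.1 B * E j S.1 B) := Finset.sum_comm
    have hbound2 : ∀ j ∈ univ.erase i,
        ∑ S : {S : Finset (Fin P) // S.card = K}, ∑ B : Fin m → Bool, W B * (E i S.1 B * E j S.1 B)
          ≤ C * (q * (p * s + p * t i j / K)) := by
      intro j hj
      rw [Finset.mem_erase] at hj
      have hji : i ≠ j := fun hh => hj.1 hh.symm
      rw [hval2 i j hji]
      have hCUij := hCU i j hji
      calc p^2 * (C - C*u - C*u + ((P - (Sstar i ∪ Sstar j).card).choose K : ℝ))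
          ≤ p^2 * (C - C*u - C*u + C * (u^2 + t i j / K * (1 - u))) := by
            apply mul_le_mul_of_nonneg_left _ (by positivity)
            linarith [hCUij]
        _ = C * (q * (p * s + p * t i j / K)) := by
            rw [hq, hsu]
            ring
    have htotal : C * (q * (1 - δ i)) ≤ ∑ S : {S : Finset (Fin P) // S.card = K},
        ∑ B : Fin m → Bool,
          (W B * (if ((B i = true ∧ (S.1 ∩ Sstar i).Nonempty)
            ∧ ∀ j : Fin m, j ≠ i → ¬(B j = true ∧ (S.1 ∩ Sstar j).Nonempty)) then (1:ℝ) else 0)) := by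
      refine le_trans ?_ hlow1
      rw [hsplit, hval1 i]
      have hsum2 : ∑ j ∈ univ.erase i, ∑ S : {S : Finset (Fin P) // S.card = K},
            ∑ B : Fin m → Bool, W B * (E i S.1 B * E j S.1 B)
          ≤ ∑ j ∈ univ.erase i, C * (q * (p * s + p * t i j / K)) :=
        Finset.sum_le_sum hbound2
      have hδi : C * (q * δ i) = ∑ j ∈ univ.erase i, C * (q * (p * s + p * t i j / K)) := by
        rw [hδ]; dsimp only
        rw [Finset.mul_sum, Finset.mul_sum]
      nlinarith [hsum2, hδi]
    rw [hcond, ← sub_nonneg]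
    have expand : 1/C * (∑ S : {S : Finset (Fin P) // S.card = K}, ∑ B : Fin m → Bool,
          (W B * (if ((B i = true ∧ (S.1 ∩ Sstar i).Nonempty)
            ∧ ∀ j : Fin m, j ≠ i → ¬(B j = true ∧ (S.1 ∩ Sstar j).Nonempty)) then (1:ℝ) else 0)))
        - q * (1 - δ i)
        = (1/C) * ((∑ S : {S : Finset (Fin P) // S.card = K}, ∑ B : Fin m → Bool,
          (W B * (if ((B i = true ∧ (S.1 ∩ Sstar i).Nonempty)
            ∧ ∀ j : Fin m, j ≠ i → ¬(B j = true ∧ (S.1 ∩ Sstar j).Nonempty)) then (1:ℝ) else 0)))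
          - C * (q * (1 - δ i))) := by
      field_simp
    rw [expand]
    exact mul_nonneg (by positivity) (sub_nonneg.mpr htotal)
  -- nonnegativity of r
  have hr0 : ∀ i : Fin m, 0 ≤ r i := by
    intro i
    rw [hr i]
    unfold condProb
    apply mul_nonneg (by positivity)
    apply Finset.sum_nonneg; intro S _
    apply Finset.sum_nonneg; intro B _
    apply mul_nonneg
    · apply Finset.prod_nonneg; intro k _; split_ifs <;> linarith
    · split_ifs <;> norm_num
  have hmax : ∀ i : Fin m, q * max 0 (1 - δ i) ≤ r i := by
    intro i
    rcases le_total (1 - δ i) 0 with hc | hc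
    · rw [max_eq_left hc, mul_zero]; exact hr0 i
    · rw [max_eq_right hc]; exact hri i
  have hmax0 : ∀ i : Fin m, 0 ≤ max 0 (1 - δ i) := fun i => le_max_left _ _
  have hmax1 : ∀ i : Fin m, max 0 (1 - δ i) ≤ 1 := fun i =>
    max_le (by norm_num) (by linarith [hδ0 i])
  have hprod1 : ∏ i : Fin m, (q * max 0 (1 - δ i))^h ≤ ∏ i : Fin m, (r i)^h :=
    Finset.prod_le_prod (fun i _ => by positivity)
      (fun i _ => pow_le_pow_left₀ (by positivity) (hmax i) h)
  have hprodeq : ∏ i : Fin m, (q * max 0 (1 - δ i))^h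
      = q^(h*m) * ∏ i : Fin m, (max 0 (1 - δ i))^h := by
    simp only [mul_pow, Finset.prod_mul_distrib, Finset.prod_const, Finset.card_univ,
      Fintype.card_fin]
    rw [← pow_mul]
  have hwei : 1 - ∑ i : Fin m, (1 - (max 0 (1 - δ i))^h) ≤ ∏ i : Fin m, (max 0 (1 - δ i))^h :=
    weierstrass m _ (fun i => by positivity) (fun i => pow_le_one₀ (hmax0 i) (hmax1 i))
  have hbern : ∀ i : Fin m, 1 - (max 0 (1 - δ i))^h ≤ (h:ℝ) * δ i := by
    intro i
    have hb := one_add_mul_le_pow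
      (show (-2:ℝ) ≤ max 0 (1 - δ i) - 1 by linarith [hmax0 i]) h
    rw [show (1 : ℝ) + (max 0 (1 - δ i) - 1) = max 0 (1 - δ i) by ring] at hb
    have h1a : 1 - max 0 (1 - δ i) ≤ δ i := by
      rcases le_total (1 - δ i) 0 with hc | hc
      · rw [max_eq_left hc]; linarith
      · rw [max_eq_right hc]; linarith
    have h2a := mul_le_mul_of_nonneg_left h1a (by positivity : (0:ℝ) ≤ (h:ℝ))
    linarith [hb, h2a]
  have hsumbern : ∑ i : Fin m, (1 - (max 0 (1 - δ i))^h) ≤ (h:ℝ) * ∑ i : Fin m, δ i := by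
    rw [Finset.mul_sum]; exact Finset.sum_le_sum (fun i _ => hbern i)
  -- sum of δ
  have hsumδ : ∑ i : Fin m, δ i = (m:ℝ) * ((m:ℝ) - 1) * (p * s)
      + p / K * (2 * ∑ e ∈ univ.filter (fun e : Fin m × Fin m => e.1 < e.2), t e.1 e.2) := by
    rw [hδ]
    dsimp only
    rw [Finset.sum_congr rfl (fun i (_ : i ∈ univ) => Finset.sum_add_distrib), Finset.sum_add_distrib]
    congr 1
    · have hone : ∀ i : Fin m, ∑ _j ∈ univ.erase i, (p*s) = ((m-1:ℕ):ℝ) * (p*s) := by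
        intro i
        rw [Finset.sum_const, Finset.card_erase_of_mem (Finset.mem_univ i), Finset.card_univ,
          Fintype.card_fin, nsmul_eq_mul]
      rw [Finset.sum_congr rfl (fun i _ => hone i), Finset.sum_const, Finset.card_univ,
        Fintype.card_fin, nsmul_eq_mul]
      push_cast [Nat.cast_sub hm]
      ring
    · have hps := pair_sum m (fun i j => p * t i j / K)
        (fun i j => by simp only [ht]; rw [Finset.inter_comm])
      rw [hps]
      have hpull : ∑ e ∈ univ.filter (fun e : Fin m × Fin m => e.1 < e.2), p * t e.1 e.2 / K
          = p/K * ∑ e ∈ univ.filter (fun e : Fin m × Fin m => e.1 < e.2), t e.1 e.2 := by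
        rw [Finset.mul_sum]; exact Finset.sum_congr rfl (fun e _ => by ring)
      rw [hpull]; ring
  -- final chain
  have hfinal1 : q^(h*m) * (1 - (h:ℝ) * ∑ i : Fin m, δ i) ≤ ∏ i : Fin m, (r i)^h := by
    calc q^(h*m) * (1 - (h:ℝ) * ∑ i : Fin m, δ i)
        ≤ q^(h*m) * ∏ i : Fin m, (max 0 (1 - δ i))^h := by
          apply mul_le_mul_of_nonneg_left _ (by positivity)
          linarith [hwei, hsumbern]
      _ = ∏ i : Fin m, (q * max 0 (1 - δ i))^h := hprodeq.symm
      _ ≤ ∏ i : Fin m, (r i)^h := hprod1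
  rw [hsdef]
  have hSt0 : 0 ≤ ∑ e ∈ univ.filter (fun e : Fin m × Fin m => e.1 < e.2), t e.1 e.2 :=
    Finset.sum_nonneg (fun e _ => ht0 e.1 e.2)
  have hcmp : 1 - 2 * (h : ℝ) * (m : ℝ) ^ 2 * (p * s) -
        2 * (h : ℝ) * p / (K : ℝ) *
          (∑ e ∈ Finset.univ.filter (fun e : Fin m × Fin m => e.1 < e.2),
            ((Sstar e.1 ∩ Sstar e.2).card : ℝ))
      ≤ 1 - (h:ℝ) * ∑ i : Fin m, δ i := by
    rw [hsumδ]
    have hm2 : (m:ℝ) * ((m:ℝ) - 1) ≤ 2 * (m:ℝ)^2 := by nlinarith [show (1:ℝ) ≤ (m:ℝ) by exact_mod_cast hm]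
    have hps0 : 0 ≤ p * s := mul_nonneg hp0 hs0
    have hh0 : (0:ℝ) ≤ (h:ℝ) := by positivity
    have heqt : (∑ e ∈ Finset.univ.filter (fun e : Fin m × Fin m => e.1 < e.2),
        ((Sstar e.1 ∩ Sstar e.2).card : ℝ))
        = ∑ e ∈ univ.filter (fun e : Fin m × Fin m => e.1 < e.2), t e.1 e.2 := rfl
    rw [heqt]
    have hexp : (h:ℝ) * ((m:ℝ) * ((m:ℝ) - 1) * (p * s)
        + p / K * (2 * ∑ e ∈ univ.filter (fun e : Fin m × Fin m => e.1 < e.2), t e.1 e.2))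
        = (h:ℝ) * ((m:ℝ) * ((m:ℝ) - 1)) * (p*s)
          + 2 * (h : ℝ) * p / (K : ℝ) * ∑ e ∈ univ.filter (fun e : Fin m × Fin m => e.1 < e.2), t e.1 e.2 := by
      ring
    rw [hexp]
    have : (h:ℝ) * ((m:ℝ) * ((m:ℝ) - 1)) * (p*s) ≤ 2 * (h : ℝ) * (m:ℝ)^2 * (p * s) := by
      have := mul_le_mul_of_nonneg_left hm2 hh0
      nlinarith [hps0, hh0]
    set X : ℝ := ∑ e ∈ univ.filter (fun e : Fin m × Fin m => e.1 < e.2), t e.1 e.2 with hX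
    have h2 := add_le_add_right this (2 * (h:ℝ) * p / (K:ℝ) * X)
    have h3 := sub_le_sub_left h2 (1:ℝ)
    linarith [h3]
  calc (p * s) ^ (h * m) *
        (1 - 2 * (h : ℝ) * (m : ℝ) ^ 2 * (p * s) -
          2 * (h : ℝ) * p / (K : ℝ) *
          (∑ e ∈ Finset.univ.filter (fun e : Fin m × Fin m => e.1 < e.2),
          ((Sstar e.1 ∩ Sstar e.2).card : ℝ)))
      ≤ (p * s) ^ (h * m) * (1 - (h:ℝ) * ∑ i : Fin m, δ i) := by
        apply mul_le_mul_of_nonneg_left hcmp (by positivity)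
    _ ≤ ∏ i : Fin m, (r i)^h := hfinal1
end

section
/- Let K ≥ 1 and P ≥ 3K be integers, let A and B be K-element subsets of {1,…,P} with |A ∩ B| = u (0 ≤ u ≤ K), and let S be a uniformly random K-element subset of {1,…,P}. With s := 1 − C(P−K,K)/C(P,K), the probability that S ∩ A ≠ ∅ and S ∩ B ≠ ∅ is at most s·u/K + 2·s². -/
open Finset

lemma prod_one_add_ge (f : ℕ → ℝ) (n : ℕ) (hf : ∀ i ∈ range n, 0 ≤ f i) :
    1 + ∑ i ∈ range n, f i ≤ ∏ i ∈ range n, (1 + f i) := by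
  induction n with
  | zero => simp
  | succ n ih =>
    have hf' : ∀ i ∈ range n, 0 ≤ f i := fun i hi => hf i (by simp at hi ⊢; omega)
    have h1 : 0 ≤ ∑ i ∈ range n, f i := sum_nonneg hf'
    have hfn : 0 ≤ f n := hf n (by simp)
    rw [prod_range_succ, sum_range_succ]
    nlinarith [ih hf']

lemma desc_sq (P a K : ℕ) :
    P.descFactorial K * (P - 2*a).descFactorial K ≤ ((P - a).descFactorial K)^2 := by
  rw [Nat.descFactorial_eq_prod_range, Nat.descFactorial_eq_prod_range,
    Nat.descFactorial_eq_prod_range, ← prod_mul_distrib, pow_two, ← prod_mul_distrib]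
  apply prod_le_prod'
  intro i _
  rcases le_or_gt (2*a + i) P with h | h
  · have e1 : P - i = (P - 2*a - i) + 2*a := by omega
    have e2 : P - a - i = (P - 2*a - i) + a := by omega
    rw [e1, e2]
    nlinarith [Nat.zero_le (P - 2*a - i)]
  · have : P - 2*a - i = 0 := by omega
    simp [this]

lemma choose_sq (P a K : ℕ) :
    P.choose K * (P - 2*a).choose K ≤ ((P - a).choose K)^2 := by
  have h := desc_sq P a K
  rw [Nat.descFactorial_eq_factorial_mul_choose, Nat.descFactorial_eq_factorial_mul_choose,
    Nat.descFactorial_eq_factorial_mul_choose] at h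
  have hfac : 0 < K.factorial * K.factorial := Nat.mul_pos K.factorial_pos K.factorial_pos
  refine Nat.le_of_mul_le_mul_left ?_ hfac
  calc K.factorial * K.factorial * (P.choose K * (P - 2*a).choose K)
      = K.factorial * P.choose K * (K.factorial * (P - 2*a).choose K) := by ring
    _ ≤ (K.factorial * (P - a).choose K)^2 := h
    _ = K.factorial * K.factorial * ((P - a).choose K)^2 := by ring


variable {P : ℕ}

lemma missCount (K : ℕ) (X : Finset (Fin P)) :
    (((powersetCard K (univ : Finset (Fin P)))).filter
      (fun S => ¬(S ∩ X).Nonempty)).card = (P - X.card).choose K := by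
  classical
  have heq : ((powersetCard K (univ : Finset (Fin P)))).filter (fun S => ¬(S ∩ X).Nonempty)
      = powersetCard K Xᶜ := by
    ext S
    simp only [mem_filter, mem_powersetCard, subset_univ, true_and,
      not_nonempty_iff_eq_empty]
    constructor
    · rintro ⟨hc, he⟩
      refine ⟨fun x hx => mem_compl.2 fun hxX => ?_, hc⟩
      have : x ∈ S ∩ X := mem_inter.2 ⟨hx, hxX⟩
      simp [he] at this
    · rintro ⟨hsub, hc⟩
      refine ⟨hc, eq_empty_iff_forall_notMem.2 fun x hx => ?_⟩
      have h1 := mem_inter.1 hx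
      exact (mem_compl.1 (hsub h1.1)) h1.2
  rw [heq, card_powersetCard, card_compl, Fintype.card_fin]

lemma hitCount (K : ℕ) (X : Finset (Fin P)) :
    (((powersetCard K (univ : Finset (Fin P)))).filter
      (fun S => (S ∩ X).Nonempty)).card + (P - X.card).choose K = P.choose K := by
  classical
  have h := card_filter_add_card_filter_not
    (s := powersetCard K (univ : Finset (Fin P))) (p := fun S => (S ∩ X).Nonempty)
  rw [missCount K X] at h
  rw [h, card_powersetCard, card_univ, Fintype.card_fin]

lemma crossCount (K : ℕ) (X Y : Finset (Fin P)) :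
    (((powersetCard K (univ : Finset (Fin P)))).filter
      (fun S => (S ∩ X).Nonempty ∧ (S ∩ Y).Nonempty)).card
      + (P - X.card).choose K + (P - Y.card).choose K
      = P.choose K + (P - (X ∪ Y).card).choose K := by
  classical
  set pc := powersetCard K (univ : Finset (Fin P)) with hpc
  have h1 := card_filter_add_card_filter_not
    (s := pc) (p := fun S => (S ∩ X).Nonempty ∧ (S ∩ Y).Nonempty)
  have h2 : pc.filter (fun S => ¬((S ∩ X).Nonempty ∧ (S ∩ Y).Nonempty))
      = pc.filter (fun S => ¬(S ∩ X).Nonempty) ∪ pc.filter (fun S => ¬(S ∩ Y).Nonempty) := by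
    rw [← filter_or]
    exact filter_congr fun S _ => by tauto
  have h3 : pc.filter (fun S => ¬(S ∩ X).Nonempty) ∩ pc.filter (fun S => ¬(S ∩ Y).Nonempty)
      = pc.filter (fun S => ¬(S ∩ (X ∪ Y)).Nonempty) := by
    rw [← filter_and]
    refine filter_congr fun S _ => ?_
    simp only [not_nonempty_iff_eq_empty, inter_union_distrib_left, union_eq_empty]
  have h4 := card_union_add_card_inter (pc.filter fun S => ¬(S ∩ X).Nonempty)
    (pc.filter fun S => ¬(S ∩ Y).Nonempty)
  rw [h3, missCount, missCount, missCount] at h4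
  have h5 : pc.card = P.choose K := by
    rw [hpc, card_powersetCard, card_univ, Fintype.card_fin]
  rw [h2] at h1
  omega






set_option maxHeartbeats 1000000 in
lemma part1 (K P u : ℕ) (hK : 1 ≤ K) (hP : 3 * K ≤ P) (huK : u ≤ K)
    (hs34 : linkProb K P ≤ 3/4) :
    1 - ((P - u).choose K : ℝ) / (P.choose K : ℝ) ≤
      linkProb K P * (u : ℝ) / (K : ℝ) + (linkProb K P) ^ 2 := by
  have hNpos : 0 < P.choose K := Nat.choose_pos (by omega)
  have hN : (0 : ℝ) < (P.choose K : ℝ) := by exact_mod_cast hNpos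
  set s : ℝ := linkProb K P with hsdef
  set q : ℕ → ℝ := fun j => (K : ℝ) / ((P : ℝ) - j) with hq
  set m : ℕ → ℝ := fun j => ((P - j).choose K : ℝ) / (P.choose K : ℝ) with hm
  have hPj : ∀ j : ℕ, j ≤ K → (0 : ℝ) < (P : ℝ) - j := by
    intro j hj
    have : (j : ℝ) < (P : ℝ) := by exact_mod_cast (by omega : j < P)
    linarith
  have hq_nonneg : ∀ j : ℕ, j ≤ K → 0 ≤ q j := by
    intro j hj
    exact div_nonneg (by positivity) (le_of_lt (hPj j hj))
  have hq_le_one : ∀ j : ℕ, j ≤ K → q j ≤ 1 := by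
    intro j hj
    rw [hq]
    rw [div_le_one (hPj j hj)]
    have : (j : ℝ) ≤ (K : ℝ) := by exact_mod_cast hj
    have hp3 : (3 : ℝ) * K ≤ (P : ℝ) := by exact_mod_cast hP
    have hK1 : (1 : ℝ) ≤ (K : ℝ) := by exact_mod_cast hK
    linarith
  have hq_mono : ∀ i j : ℕ, i ≤ j → j ≤ K → q i ≤ q j := by
    intro i j hij hj
    apply div_le_div_of_nonneg_left (by positivity) (hPj j hj)
    have : (i : ℝ) ≤ (j : ℝ) := by exact_mod_cast hij
    linarith
  have hm_nonneg : ∀ j : ℕ, 0 ≤ m j := fun j => div_nonneg (by positivity) (le_of_lt hN)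
  have hm_le_one : ∀ j : ℕ, m j ≤ 1 := by
    intro j
    rw [hm, div_le_one hN]
    exact_mod_cast Nat.choose_le_choose K (Nat.sub_le P j)
  have hm_anti : ∀ i j : ℕ, i ≤ j → m j ≤ m i := by
    intro i j hij
    simp only [hm]
    gcongr
  have hstep : ∀ j : ℕ, j < K → m (j + 1) = m j * (1 - q j) := by
    intro j hj
    have hjP : j < P := by omega
    have nat_id : (P - (j + 1)).choose K * (P - j) = (P - j).choose K * (P - j - K) := by
      have h := Nat.choose_mul_succ_eq (P - (j + 1)) K
      have e1 : P - (j + 1) + 1 = P - j := by omega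
      rw [e1] at h
      exact h
    have key : ((P - (j + 1)).choose K : ℝ) * ((P : ℝ) - j)
        = ((P - j).choose K : ℝ) * (((P : ℝ) - j) - K) := by
      have c1 : ((P - j : ℕ) : ℝ) = (P : ℝ) - j := by
        rw [Nat.cast_sub (by omega)]
      have c2 : ((P - j - K : ℕ) : ℝ) = ((P : ℝ) - j) - K := by
        rw [Nat.cast_sub (by omega), Nat.cast_sub (by omega)]
      calc ((P - (j + 1)).choose K : ℝ) * ((P : ℝ) - j)
          = (((P - (j + 1)).choose K * (P - j) : ℕ) : ℝ) := by push_cast [c1]; ring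
        _ = (((P - j).choose K * (P - j - K) : ℕ) : ℝ) := by rw [nat_id]
        _ = ((P - j).choose K : ℝ) * (((P : ℝ) - j) - K) := by push_cast [c2]; ring
    have hPjpos := hPj j (le_of_lt hj)
    have expand : (1 : ℝ) - q j = (((P : ℝ) - j) - K) / ((P : ℝ) - j) := by
      rw [hq]; field_simp
    simp only [hm, expand]
    rw [div_mul_div_comm, div_eq_div_iff (ne_of_gt hN) (by positivity)]
    linear_combination ((P.choose K : ℝ)) * key
  have hm0 : m 0 = 1 := by
    rw [hm]; simp [div_self (ne_of_gt hN)]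
  have hsK : s = 1 - m K := by rw [hsdef, hm, linkProb]
  have hs0 : 0 ≤ s := by
    rw [hsK]; linarith [hm_le_one K]
  have hs1 : s ≤ 1 := by
    rw [hsK]; linarith [hm_nonneg K]
  -- product formula
  have hprod : ∀ n : ℕ, n ≤ K → m n = ∏ j ∈ range n, (1 - q j) := by
    intro n
    induction n with
    | zero => intro _; simp [hm0]
    | succ n ih =>
      intro hn
      rw [prod_range_succ, ← ih (by omega), hstep n (by omega)]
  -- Q bound
  set Q : ℝ := ∑ j ∈ range K, q j with hQdef
  have hQ0 : 0 ≤ Q := sum_nonneg fun j hj => hq_nonneg j (by simp at hj; omega)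
  have hQ4s : Q ≤ 4 * s := by
    have w1 : 1 + Q ≤ ∏ j ∈ range K, (1 + q j) :=
      prod_one_add_ge q K (fun i hi => hq_nonneg i (by simp at hi; omega))
    have w2 : (∏ j ∈ range K, (1 - q j)) * (∏ j ∈ range K, (1 + q j)) ≤ 1 := by
      rw [← prod_mul_distrib]
      apply prod_le_one
      · intro i hi
        simp only [mem_range] at hi
        nlinarith [hq_nonneg i (by omega), hq_le_one i (by omega)]
      · intro i hi
        simp only [mem_range] at hi
        nlinarith [hq_nonneg i (by omega), hq_le_one i (by omega)]
    have hmK : m K = ∏ j ∈ range K, (1 - q j) := hprod K le_rfl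
    have w3 : m K * (1 + Q) ≤ 1 := by
      calc m K * (1 + Q) ≤ m K * ∏ j ∈ range K, (1 + q j) := by
            apply mul_le_mul_of_nonneg_left w1 (hm_nonneg K)
        _ ≤ 1 := by rw [hmK]; exact w2
    have : (1 - s) * (1 + Q) ≤ 1 := by rw [hsK] at *; linarith [w3]
    nlinarith
  -- sums
  set T : ℝ := ∑ j ∈ range u, m j * q j with hTdef
  set R : ℝ := ∑ j ∈ Ico u K, m j * q j with hRdef
  set Asum : ℝ := ∑ j ∈ range u, q j with hAdef
  set Bsum : ℝ := ∑ j ∈ Ico u K, q j with hBdef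
  have hsum_split : ∀ f : ℕ → ℝ, ∑ j ∈ range u, f j + ∑ j ∈ Ico u K, f j = ∑ j ∈ range K, f j := by
    intro f
    rw [range_eq_Ico, range_eq_Ico]
    exact sum_Ico_consecutive f (Nat.zero_le u) huK
  have htel : ∀ n : ℕ, n ≤ K → 1 - m n = ∑ j ∈ range n, m j * q j := by
    intro n hn
    have h1 : ∑ j ∈ range n, (m j - m (j + 1)) = m 0 - m n := sum_range_sub' m n
    have h2 : ∑ j ∈ range n, (m j - m (j + 1)) = ∑ j ∈ range n, m j * q j := by
      apply sum_congr rfl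
      intro j hj
      simp only [mem_range] at hj
      rw [hstep j (by omega)]
      ring
    rw [← h2, h1, hm0]
  have hS1 : 1 - m u = T := htel u huK
  have hS2 : s = T + R := by
    rw [hsK, htel K le_rfl, hTdef, hRdef, hsum_split (fun j => m j * q j)]
  have hQAB : Q = Asum + Bsum := by
    rw [hQdef, hAdef, hBdef, hsum_split q]
  have hA0 : 0 ≤ Asum := sum_nonneg fun j hj => hq_nonneg j (by simp at hj; omega)
  have hB0 : 0 ≤ Bsum := sum_nonneg fun j hj => by
    simp only [mem_Ico] at hj; exact hq_nonneg j (by omega)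
  have hS3 : T ≤ Asum := by
    apply sum_le_sum
    intro j hj
    simp only [mem_range] at hj
    nlinarith [hm_le_one j, hq_nonneg j (by omega), hm_nonneg j]
  have hS4 : (1 - s) * Bsum ≤ R := by
    rw [mul_sum]
    apply sum_le_sum
    intro j hj
    simp only [mem_Ico] at hj
    have := hm_anti j K (by omega)
    have hmj : 1 - s ≤ m j := by rw [hsK]; linarith
    nlinarith [hq_nonneg j (by omega)]
  have hS5 : ((K : ℝ) - u) * Asum ≤ (u : ℝ) * Bsum := by
    rcases eq_or_lt_of_le huK with h | h
    · have hB : Bsum = 0 := by rw [hBdef, h]; simp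
      have : ((K : ℝ) - u) = 0 := by rw [h]; ring
      rw [this, hB]; simp
    · have hAu : Asum ≤ (u : ℝ) * q u := by
        calc Asum ≤ ∑ _j ∈ range u, q u :=
              sum_le_sum fun j hj => hq_mono j u (le_of_lt (by simpa using hj)) huK
          _ = (u : ℝ) * q u := by rw [sum_const, card_range]; simp [nsmul_eq_mul]
      have hBu : ((K : ℝ) - u) * q u ≤ Bsum := by
        have : ∑ _j ∈ Ico u K, q u ≤ Bsum := by
          apply sum_le_sum
          intro j hj
          simp only [mem_Ico] at hj
          exact hq_mono u j hj.1 (by omega)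
        calc ((K : ℝ) - u) * q u = ((K - u : ℕ) : ℝ) * q u := by
              rw [Nat.cast_sub huK]
          _ = ∑ _j ∈ Ico u K, q u := by rw [sum_const, Nat.card_Ico]; simp [nsmul_eq_mul]
          _ ≤ Bsum := this
      have hqu0 : 0 ≤ q u := hq_nonneg u huK
      have hKu : (0 : ℝ) ≤ (K : ℝ) - u := by
        have : (u : ℝ) ≤ (K : ℝ) := by exact_mod_cast huK
        linarith
      have hu0 : (0 : ℝ) ≤ (u : ℝ) := Nat.cast_nonneg u
      nlinarith
  have hS6 : (K : ℝ) * Asum ≤ (u : ℝ) * Q := by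
    rw [hQAB]
    nlinarith [hS5]
  -- final combination
  have hKR : (0 : ℝ) < (K : ℝ) := by exact_mod_cast (by omega : 0 < K)
  have hu0 : (0 : ℝ) ≤ (u : ℝ) := Nat.cast_nonneg u
  have hKu : (0 : ℝ) ≤ (K : ℝ) - u := by
    have : (u : ℝ) ≤ (K : ℝ) := by exact_mod_cast huK
    linarith
  have c1 : (K : ℝ) * T ≤ (u : ℝ) * T + ((K : ℝ) - u) * Asum := by
    nlinarith [hS3]
  have c2 : (u : ℝ) * T ≤ (u : ℝ) * s - (u : ℝ) * ((1 - s) * Bsum) := by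
    have : T = s - R := by linarith [hS2]
    rw [this]
    nlinarith [hS4]
  have c3 : ((K : ℝ) - u) * Asum ≤ (1 - s) * ((u : ℝ) * Bsum) + s * (((K : ℝ) - u) * Asum) := by
    nlinarith [hS5, mul_le_mul_of_nonneg_left hS5 (by linarith : (0:ℝ) ≤ 1 - s)]
  have c4 : s * (((K : ℝ) - u) * Asum) ≤ (K : ℝ) * s ^ 2 := by
    have e1 : (K : ℝ) * (((K : ℝ) - u) * Asum) ≤ ((K : ℝ) - u) * ((u : ℝ) * Q) := by
      nlinarith [mul_le_mul_of_nonneg_left hS6 hKu]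
    have e2 : ((K : ℝ) - u) * (u : ℝ) ≤ (K : ℝ) ^ 2 / 4 := by
      nlinarith [sq_nonneg ((K : ℝ) - 2 * u)]
    have e3 : ((K : ℝ) - u) * ((u : ℝ) * Q) ≤ (K : ℝ) ^ 2 / 4 * Q := by
      nlinarith [mul_le_mul_of_nonneg_right e2 hQ0]
    have e4 : (K : ℝ) * (((K : ℝ) - u) * Asum) ≤ (K : ℝ) ^ 2 * s := by
      calc (K : ℝ) * (((K : ℝ) - u) * Asum) ≤ (K : ℝ) ^ 2 / 4 * Q := le_trans e1 e3
        _ ≤ (K : ℝ) ^ 2 / 4 * (4 * s) := by nlinarith [hQ4s]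
        _ = (K : ℝ) ^ 2 * s := by ring
    have e5 : ((K : ℝ) - u) * Asum ≤ (K : ℝ) * s := by
      have h' : (K : ℝ) * (((K : ℝ) - u) * Asum) ≤ (K : ℝ) * ((K : ℝ) * s) := by
        nlinarith [e4]
      exact le_of_mul_le_mul_left h' hKR
    nlinarith [mul_le_mul_of_nonneg_left e5 hs0]
  have final : (K : ℝ) * T ≤ (u : ℝ) * s + (K : ℝ) * s ^ 2 := by
    have : (u : ℝ) * ((1 - s) * Bsum) = (1 - s) * ((u : ℝ) * Bsum) := by ring
    linarith [c1, c2, c3, c4]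
  have goal2 : 1 - m u ≤ s * u / K + s ^ 2 := by
    have hdiv : s * u / K + s ^ 2 = ((u : ℝ) * s + (K : ℝ) * s ^ 2) / K := by
      field_simp
    rw [hS1, hdiv, le_div_iff₀ hKR]
    linarith [final]
  calc 1 - ((P - u).choose K : ℝ) / (P.choose K : ℝ) = 1 - m u := by simp only [hm]
    _ ≤ s * u / K + s ^ 2 := goal2





set_option maxHeartbeats 1000000 in

set_option maxHeartbeats 1000000 in
theorem stmt11 (K P u : ℕ) (hK : 1 ≤ K) (hP : 3 * K ≤ P)
    (A B : Finset (Fin P)) (hA : A.card = K) (hB : B.card = K)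
    (hu : (A ∩ B).card = u) :
    ((((Finset.powersetCard K (Finset.univ : Finset (Fin P))).filter
        (fun S => (S ∩ A).Nonempty ∧ (S ∩ B).Nonempty)).card : ℝ) /
      (P.choose K : ℝ)) ≤
    linkProb K P * (u : ℝ) / (K : ℝ) + 2 * (linkProb K P) ^ 2 := by
  classical
  have hNpos : 0 < P.choose K := Nat.choose_pos (by omega)
  have hN : (0 : ℝ) < (P.choose K : ℝ) := by exact_mod_cast hNpos
  have hMKle : (P - K).choose K ≤ P.choose K := Nat.choose_le_choose K (Nat.sub_le P K)
  set s : ℝ := linkProb K P with hsdef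
  have hs0 : 0 ≤ s := by
    rw [hsdef, linkProb, sub_nonneg, div_le_one hN]
    exact_mod_cast hMKle
  have hs1 : s ≤ 1 := by
    rw [hsdef, linkProb]
    have : (0 : ℝ) ≤ ((P - K).choose K : ℝ) / (P.choose K : ℝ) := by positivity
    linarith
  set pc := Finset.powersetCard K (Finset.univ : Finset (Fin P)) with hpc
  have hpcN : pc.card = P.choose K := by
    rw [hpc, card_powersetCard, card_univ, Fintype.card_fin]
  have hEle : (pc.filter (fun S => (S ∩ A).Nonempty ∧ (S ∩ B).Nonempty)).card ≤ P.choose K := by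
    rw [← hpcN]; exact card_le_card (filter_subset _ _)
  have hKR : (0 : ℝ) < (K : ℝ) := by exact_mod_cast (by omega : 0 < K)
  by_cases hcase : s ≤ 3 / 4
  · -- main case
    have huK : u ≤ K := by
      rw [← hu, ← hA]; exact card_le_card inter_subset_left
    set X := A \ B with hX
    set Y := B \ A with hY
    have hXc : X.card = K - u := by
      rw [hX]
      have := card_sdiff_add_card_inter A B
      omega
    have hYc : Y.card = K - u := by
      rw [hY]
      have := card_sdiff_add_card_inter B A
      rw [inter_comm] at this
      omega
    have hXYc : (X ∪ Y).card = (K - u) + (K - u) := by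
      rw [card_union_of_disjoint disjoint_sdiff_sdiff, hXc, hYc]
    have hsubset : pc.filter (fun S => (S ∩ A).Nonempty ∧ (S ∩ B).Nonempty) ⊆
        pc.filter (fun S => (S ∩ (A ∩ B)).Nonempty) ∪
        pc.filter (fun S => (S ∩ X).Nonempty ∧ (S ∩ Y).Nonempty) := by
      intro S hS
      simp only [mem_filter, mem_union] at hS ⊢
      obtain ⟨hSpc, hSA, hSB⟩ := hS
      by_cases hI : (S ∩ (A ∩ B)).Nonempty
      · exact Or.inl ⟨hSpc, hI⟩
      · refine Or.inr ⟨hSpc, ?_, ?_⟩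
        · obtain ⟨x, hx⟩ := hSA
          rw [mem_inter] at hx
          have hxB : x ∉ B := fun hxB =>
            hI ⟨x, by simp [mem_inter, hx.1, hx.2, hxB]⟩
          exact ⟨x, mem_inter.2 ⟨hx.1, mem_sdiff.2 ⟨hx.2, hxB⟩⟩⟩
        · obtain ⟨x, hx⟩ := hSB
          rw [mem_inter] at hx
          have hxA : x ∉ A := fun hxA =>
            hI ⟨x, by simp [mem_inter, hx.1, hx.2, hxA]⟩
          exact ⟨x, mem_inter.2 ⟨hx.1, mem_sdiff.2 ⟨hx.2, hxA⟩⟩⟩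
    have hcard1 : (pc.filter (fun S => (S ∩ A).Nonempty ∧ (S ∩ B).Nonempty)).card ≤
        (pc.filter (fun S => (S ∩ (A ∩ B)).Nonempty)).card +
        (pc.filter (fun S => (S ∩ X).Nonempty ∧ (S ∩ Y).Nonempty)).card :=
      le_trans (card_le_card hsubset) (card_union_le _ _)
    have hI := hitCount K (A ∩ B)
    rw [hu] at hI
    have hXY := crossCount K X Y
    rw [hXc, hYc, hXYc] at hXY
    -- real versions
    set a := K - u with ha
    have hcardE : ((pc.filter (fun S => (S ∩ A).Nonempty ∧ (S ∩ B).Nonempty)).card : ℝ) ≤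
        ((P.choose K : ℝ) - ((P - u).choose K : ℝ)) +
        ((P.choose K : ℝ) + ((P - (a + a)).choose K : ℝ) - 2 * ((P - a).choose K : ℝ)) := by
      have e1 : ((pc.filter (fun S => (S ∩ (A ∩ B)).Nonempty)).card : ℝ)
          = (P.choose K : ℝ) - ((P - u).choose K : ℝ) := by
        have h' : ((pc.filter (fun S => (S ∩ (A ∩ B)).Nonempty)).card : ℝ)
            + ((P - u).choose K : ℝ) = (P.choose K : ℝ) := by
          rw [hpc]; exact_mod_cast hI
        linarith
      have e2 : ((pc.filter (fun S => (S ∩ X).Nonempty ∧ (S ∩ Y).Nonempty)).card : ℝ)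
          = (P.choose K : ℝ) + ((P - (a + a)).choose K : ℝ) - 2 * ((P - a).choose K : ℝ) := by
        have h' : ((pc.filter (fun S => (S ∩ X).Nonempty ∧ (S ∩ Y).Nonempty)).card : ℝ)
            + ((P - a).choose K : ℝ) + ((P - a).choose K : ℝ)
            = (P.choose K : ℝ) + ((P - (a + a)).choose K : ℝ) := by
          rw [hpc]; exact_mod_cast hXY
        linarith
      calc ((pc.filter (fun S => (S ∩ A).Nonempty ∧ (S ∩ B).Nonempty)).card : ℝ)
          ≤ ((pc.filter (fun S => (S ∩ (A ∩ B)).Nonempty)).card : ℝ) +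
            ((pc.filter (fun S => (S ∩ X).Nonempty ∧ (S ∩ Y).Nonempty)).card : ℝ) := by
            exact_mod_cast hcard1
        _ = _ := by rw [e1, e2]
    -- part 2 bound
    have hchsq := choose_sq P a K
    have hchsqR : (P.choose K : ℝ) * ((P - 2 * a).choose K : ℝ) ≤ ((P - a).choose K : ℝ) ^ 2 := by
      exact_mod_cast hchsq
    have h2a : a + a = 2 * a := by ring
    have hMaK : ((P - K).choose K : ℝ) ≤ ((P - a).choose K : ℝ) := by
      exact_mod_cast Nat.choose_le_choose K (by omega : P - K ≤ P - a)
    have hMaN : ((P - a).choose K : ℝ) ≤ (P.choose K : ℝ) := by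
      exact_mod_cast Nat.choose_le_choose K (Nat.sub_le P a)
    have hsN : s * (P.choose K : ℝ) = (P.choose K : ℝ) - ((P - K).choose K : ℝ) := by
      rw [hsdef, linkProb]
      field_simp
    have part2 : (P.choose K : ℝ) + ((P - (a + a)).choose K : ℝ) - 2 * ((P - a).choose K : ℝ)
        ≤ s ^ 2 * (P.choose K : ℝ) := by
      rw [h2a]
      have key : (P.choose K : ℝ) * ((P.choose K : ℝ) + ((P - 2 * a).choose K : ℝ)
          - 2 * ((P - a).choose K : ℝ)) ≤ ((P.choose K : ℝ) - ((P - K).choose K : ℝ)) ^ 2 := by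
        nlinarith [hchsqR, hMaK, hMaN]
      rw [← hsN] at key
      nlinarith [key, hN]
    -- part 1 bound
    have hp1 := part1 K P u hK hP huK hcase
    rw [← hsdef] at hp1
    have p1' : (P.choose K : ℝ) - ((P - u).choose K : ℝ) ≤ (s * u / K + s ^ 2) * (P.choose K : ℝ) := by
      have h' := mul_le_mul_of_nonneg_right hp1 (le_of_lt hN)
      rw [sub_mul, one_mul, div_mul_cancel₀ _ (ne_of_gt hN)] at h'
      linarith [h']
    rw [div_le_iff₀ hN]
    have expand : (s * ↑u / ↑K + 2 * s ^ 2) * (P.choose K : ℝ)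
        = (s * u / K + s ^ 2) * (P.choose K : ℝ) + s ^ 2 * (P.choose K : ℝ) := by ring
    calc ((pc.filter (fun S => (S ∩ A).Nonempty ∧ (S ∩ B).Nonempty)).card : ℝ)
        ≤ ((P.choose K : ℝ) - ((P - u).choose K : ℝ)) +
          ((P.choose K : ℝ) + ((P - (a + a)).choose K : ℝ) - 2 * ((P - a).choose K : ℝ)) := hcardE
      _ ≤ (s * u / K + s ^ 2) * (P.choose K : ℝ) + s ^ 2 * (P.choose K : ℝ) := by
          linarith [p1', part2]
      _ = (s * ↑u / ↑K + 2 * s ^ 2) * (P.choose K : ℝ) := by rw [expand]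
  · -- trivial case: s > 3/4
    have hs34 : (3 / 4 : ℝ) < s := not_le.1 hcase
    have hLHS : ((pc.filter (fun S => (S ∩ A).Nonempty ∧ (S ∩ B).Nonempty)).card : ℝ) /
        (P.choose K : ℝ) ≤ 1 := by
      rw [div_le_one hN]
      exact_mod_cast hEle
    have ht1 : 0 ≤ s * (u : ℝ) / (K : ℝ) := by positivity
    nlinarith [hLHS, ht1, hs34]
end

section
/- Let m ≥ 1, K ≥ 1, and P > K be integers, and let u, v be integers with 0 ≤ u ≤ K and K ≤ v ≤ m·K. Then C(v,u)·C(P−v,K−u)/C(P,K) ≤ (1/u!)·(m·K²/(P−K))^u. -/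
theorem stmt15 (m K P u v : ℕ) (hm : 1 ≤ m) (hK : 1 ≤ K) (hP : K < P)
    (hu : u ≤ K) (hv1 : K ≤ v) (hv2 : v ≤ m * K) :
    ((v.choose u : ℝ) * ((P - v).choose (K - u) : ℝ)) / (P.choose K : ℝ) ≤
      (1 / (Nat.factorial u : ℝ)) * ((m : ℝ) * (K : ℝ) ^ 2 / ((P : ℝ) - (K : ℝ))) ^ u := by
  have hKP : K ≤ P := le_of_lt hP
  -- key natural number identity
  have e1 : Nat.factorial (P - K) * Nat.descFactorial (P - K + u) u
      = Nat.factorial (P - K + u) := by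
    have h := Nat.factorial_mul_descFactorial (show u ≤ P - K + u from Nat.le_add_left u _)
    rwa [show P - K + u - u = P - K by omega] at h
  have e2 : Nat.factorial (K - u) * Nat.descFactorial K u = Nat.factorial K :=
    Nat.factorial_mul_descFactorial hu
  have e3 : P.choose (K - u) * Nat.factorial (K - u) * Nat.factorial (P - K + u)
      = Nat.factorial P := by
    have h := Nat.choose_mul_factorial_mul_factorial (show K - u ≤ P by omega)
    rwa [show P - (K - u) = P - K + u by omega] at h
  have e4 : P.choose K * Nat.factorial K * Nat.factorial (P - K)
      = Nat.factorial P := Nat.choose_mul_factorial_mul_factorial hKP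
  have key : P.choose (K - u) * Nat.descFactorial (P - K + u) u
      = P.choose K * Nat.descFactorial K u := by
    have hpos : 0 < Nat.factorial (K - u) * Nat.factorial (P - K) :=
      Nat.mul_pos (Nat.factorial_pos _) (Nat.factorial_pos _)
    apply Nat.eq_of_mul_eq_mul_right hpos
    calc P.choose (K - u) * Nat.descFactorial (P - K + u) u
          * (Nat.factorial (K - u) * Nat.factorial (P - K))
        = P.choose (K - u) * Nat.factorial (K - u)
          * (Nat.factorial (P - K) * Nat.descFactorial (P - K + u) u) := by ring
      _ = Nat.factorial P := by rw [e1, e3]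
      _ = P.choose K * (Nat.factorial (K - u) * Nat.descFactorial K u)
          * Nat.factorial (P - K) := by rw [e2, e4]
      _ = P.choose K * Nat.descFactorial K u
          * (Nat.factorial (K - u) * Nat.factorial (P - K)) := by ring
  -- natural number inequality
  have natineq : P.choose (K - u) * (P - K) ^ u ≤ P.choose K * K ^ u := by
    calc P.choose (K - u) * (P - K) ^ u
        ≤ P.choose (K - u) * Nat.descFactorial (P - K + u) u := by
          apply Nat.mul_le_mul_left
          rw [Nat.add_descFactorial_eq_ascFactorial]
          exact le_trans (Nat.pow_le_pow_left (Nat.le_succ _) u)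
            (Nat.pow_succ_le_ascFactorial _ u)
      _ = P.choose K * Nat.descFactorial K u := key
      _ ≤ P.choose K * K ^ u := Nat.mul_le_mul_left _ (Nat.descFactorial_le_pow _ _)
  -- move to the reals
  have hc : (0 : ℝ) < (P.choose K : ℝ) := by
    exact_mod_cast Nat.choose_pos hKP
  have hD : (0 : ℝ) < (P : ℝ) - (K : ℝ) := by
    have : (K : ℝ) < (P : ℝ) := by exact_mod_cast hP
    linarith
  have hDcast : (P : ℝ) - (K : ℝ) = ((P - K : ℕ) : ℝ) := by
    rw [Nat.cast_sub hKP]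
  have hb2 : ((P.choose (K - u) : ℕ) : ℝ)
      ≤ (P.choose K : ℝ) * (K : ℝ) ^ u / ((P : ℝ) - (K : ℝ)) ^ u := by
    rw [le_div_iff₀ (pow_pos hD u), hDcast]
    exact_mod_cast natineq
  have ha : (v.choose u : ℝ) ≤ ((m : ℝ) * (K : ℝ)) ^ u / (Nat.factorial u : ℝ) := by
    refine le_trans (Nat.choose_le_pow_div u v) ?_
    gcongr
    exact_mod_cast hv2
  have hb : ((P - v).choose (K - u) : ℝ) ≤ (P.choose (K - u) : ℝ) := by
    exact_mod_cast Nat.choose_le_choose (K - u) (Nat.sub_le P v)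
  have hbnn : (0 : ℝ) ≤ ((P - v).choose (K - u) : ℝ) := Nat.cast_nonneg _
  have hann : (0 : ℝ) ≤ (v.choose u : ℝ) := Nat.cast_nonneg _
  calc ((v.choose u : ℝ) * ((P - v).choose (K - u) : ℝ)) / (P.choose K : ℝ)
      ≤ (((m : ℝ) * (K : ℝ)) ^ u / (Nat.factorial u : ℝ)
          * ((P.choose K : ℝ) * (K : ℝ) ^ u / ((P : ℝ) - (K : ℝ)) ^ u)) / (P.choose K : ℝ) := by
        gcongr
        exact le_trans hb hb2
    _ = (1 / (Nat.factorial u : ℝ)) * ((m : ℝ) * (K : ℝ) ^ 2 / ((P : ℝ) - (K : ℝ))) ^ u := by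
        have hf : (Nat.factorial u : ℝ) ≠ 0 := by positivity
        rw [div_pow]
        field_simp
        ring
end

section
/- Let m ≥ 1, K ≥ 1, and P > K be integers, let U be a subset of {1,…,P} with K ≤ |U| ≤ m·K, let a ≥ 0 be a real number, and let S be a uniformly random K-element subset of {1,…,P}. Then E[exp(a·|S ∩ U|)] ≤ exp((m·K²/(P−K))·e^{a}). -/
open Finset

lemma count_sup {α : Type*} [DecidableEq α] [Fintype α] (Kn : ℕ) (T : Finset α)
    (hTK : T.card ≤ Kn) :
    ((powersetCard Kn (univ : Finset α)).filter (fun S => T ⊆ S)).card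
      = (Fintype.card α - T.card).choose (Kn - T.card) := by
  have h1 : ((univ : Finset α) \ T).card = Fintype.card α - T.card := by
    rw [sdiff_eq_inter_compl, univ_inter, card_compl]
  rw [← h1, ← card_powersetCard (Kn - T.card) (univ \ T)]
  apply card_nbij' (fun S => S \ T) (fun V => V ∪ T)
  · intro S hS
    simp only [mem_coe, mem_filter, mem_powersetCard] at hS
    obtain ⟨⟨_, hcard⟩, hTS⟩ := hS
    simp only [mem_coe, mem_powersetCard]
    refine ⟨sdiff_subset_sdiff (subset_univ S) le_rfl, ?_⟩
    rw [card_sdiff_of_subset hTS, hcard]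
  · intro V hV
    simp only [mem_coe, mem_powersetCard] at hV
    obtain ⟨hVsub, hVcard⟩ := hV
    have hdisj : Disjoint V T := Disjoint.mono_left hVsub sdiff_disjoint
    simp only [mem_coe, mem_filter, mem_powersetCard]
    refine ⟨⟨subset_univ _, ?_⟩, subset_union_right⟩
    rw [card_union_of_disjoint hdisj, hVcard]
    omega
  · intro S hS
    simp only [mem_coe, mem_filter, mem_powersetCard] at hS
    exact sdiff_union_of_subset hS.2
  · intro V hV
    simp only [mem_coe, mem_powersetCard] at hV
    dsimp only
    rw [union_sdiff_right, Finset.sdiff_eq_self_iff_disjoint]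
    exact Disjoint.mono_left hV.1 sdiff_disjoint

lemma double_count {P K : ℕ} (U : Finset (Fin P)) (j : ℕ) (hjK : j ≤ K) :
    ∑ S ∈ powersetCard K (univ : Finset (Fin P)), ((S ∩ U).card.choose j)
      = U.card.choose j * (P - j).choose (K - j) := by
  have key : ∀ S ∈ powersetCard K (univ : Finset (Fin P)),
      (S ∩ U).card.choose j = ∑ T ∈ powersetCard j U, (if T ⊆ S then 1 else 0) := by
    intro S _
    rw [← card_powersetCard j (S ∩ U), ← Finset.card_filter]
    congr 1
    ext T
    simp only [mem_powersetCard, mem_filter, subset_inter_iff]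
    tauto
  rw [sum_congr rfl key, sum_comm]
  have key2 : ∀ T ∈ powersetCard j U,
      ∑ S ∈ powersetCard K (univ : Finset (Fin P)), (if T ⊆ S then 1 else 0)
        = (P - j).choose (K - j) := by
    intro T hT
    simp only [mem_powersetCard] at hT
    rw [← Finset.card_filter]
    have := count_sup K T (hT.2 ▸ hjK)
    rw [this, hT.2, Fintype.card_fin]
  rw [sum_congr rfl key2, sum_const, smul_eq_mul, card_powersetCard]

theorem stmt16 (m K P : ℕ) (hm : 1 ≤ m) (hK : 1 ≤ K) (hP : K < P)
    (U : Finset (Fin P)) (hU1 : K ≤ U.card) (hU2 : U.card ≤ m * K)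
    (a : ℝ) (ha : 0 ≤ a) :
    (1 / (P.choose K : ℝ)) *
        ∑ S ∈ Finset.powersetCard K (Finset.univ : Finset (Fin P)),
          Real.exp (a * ((S ∩ U).card : ℝ)) ≤
      Real.exp ((m : ℝ) * (K : ℝ) ^ 2 / ((P : ℝ) - (K : ℝ)) * Real.exp a) := by
  set z := Real.exp a with hz
  have hz1 : 1 ≤ z := Real.one_le_exp ha
  have hPK : (0:ℝ) < (P:ℝ) - (K:ℝ) := by
    have : (K:ℝ) < (P:ℝ) := by exact_mod_cast hP
    linarith
  have hchoosepos : (0:ℝ) < (P.choose K : ℝ) := by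
    exact_mod_cast Nat.choose_pos hP.le
  set x := (m : ℝ) * (K : ℝ) ^ 2 / ((P : ℝ) - (K : ℝ)) * z with hx
  have hx0 : 0 ≤ x := by
    apply mul_nonneg (div_nonneg (by positivity) hPK.le) (by linarith)
  -- step 1: rewrite exp(a * c) as z ^ c and expand binomially
  have step1 : ∀ S ∈ powersetCard K (univ : Finset (Fin P)),
      Real.exp (a * ((S ∩ U).card : ℝ))
        = ∑ i ∈ range (K + 1), (z - 1) ^ i * ((S ∩ U).card.choose i : ℝ) := by
    intro S hS
    have hcard : (S ∩ U).card ≤ K := by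
      simp only [mem_powersetCard] at hS
      calc (S ∩ U).card ≤ S.card := card_le_card inter_subset_left
        _ = K := hS.2
    rw [mul_comm, Real.exp_nat_mul, ← hz]
    have : z ^ (S ∩ U).card = ((z - 1) + 1) ^ (S ∩ U).card := by ring_nf
    rw [this, add_pow]
    simp only [one_pow, mul_one]
    apply Finset.sum_subset
    · intro i hi
      simp only [mem_range] at hi ⊢
      omega
    · intro i _ hi
      simp only [mem_range, not_lt] at hi
      rw [Nat.choose_eq_zero_of_lt (by omega)]
      simp
  rw [sum_congr rfl step1, sum_comm]
  -- step 2: inner sums via double counting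
  have step2 : ∀ i ∈ range (K + 1),
      ∑ S ∈ powersetCard K (univ : Finset (Fin P)), (z - 1) ^ i * ((S ∩ U).card.choose i : ℝ)
        = (z - 1) ^ i * ((U.card.choose i : ℝ) * ((P - i).choose (K - i) : ℝ)) := by
    intro i hi
    simp only [mem_range] at hi
    rw [← mul_sum, ← Nat.cast_sum, double_count U i (by omega), Nat.cast_mul]
  rw [sum_congr rfl step2, mul_sum]
  -- step 3: per-term bound
  have step3 : ∀ i ∈ range (K + 1),
      1 / (P.choose K : ℝ) * ((z - 1) ^ i * ((U.card.choose i : ℝ) * ((P - i).choose (K - i) : ℝ)))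
        ≤ x ^ i / (Nat.factorial i : ℝ) := by
    intro i hi
    simp only [mem_range] at hi
    have hiK : i ≤ K := by omega
    have hid : (P.choose K : ℝ) * (K.choose i : ℝ) = (P.choose i : ℝ) * ((P - i).choose (K - i) : ℝ) := by
      exact_mod_cast congrArg (Nat.cast : ℕ → ℝ) (Nat.choose_mul (n := P) hiK)
    have hPi : (0:ℝ) < (P.choose i : ℝ) := by
      exact_mod_cast Nat.choose_pos (by omega)
    have hfac : (0:ℝ) < (Nat.factorial i : ℝ) := by exact_mod_cast Nat.factorial_pos i
    -- rewrite LHS as (z-1)^i * C(u,i) * C(K,i) / C(P,i)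
    have hrw : 1 / (P.choose K : ℝ) * ((z - 1) ^ i * ((U.card.choose i : ℝ) * ((P - i).choose (K - i) : ℝ)))
        = (z - 1) ^ i * ((U.card.choose i : ℝ) * (K.choose i : ℝ) / (P.choose i : ℝ)) := by
      field_simp
      linear_combination (-((z - 1) ^ i * (U.card.choose i : ℝ))) * hid
    rw [hrw]
    -- bounds
    have hu : (U.card.choose i : ℝ) ≤ ((m : ℝ) * K) ^ i / (Nat.factorial i : ℝ) := by
      calc (U.card.choose i : ℝ) ≤ ((m * K).choose i : ℝ) := by
            exact_mod_cast Nat.choose_le_choose i hU2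
        _ ≤ ((m * K : ℕ) : ℝ) ^ i / (Nat.factorial i : ℝ) := Nat.choose_le_pow_div i (m * K)
        _ = ((m : ℝ) * K) ^ i / (Nat.factorial i : ℝ) := by push_cast; ring
    have hk : (K.choose i : ℝ) ≤ (K : ℝ) ^ i / (Nat.factorial i : ℝ) := by
      have := Nat.choose_le_pow_div (α := ℝ) i K
      exact_mod_cast this
    have hp : ((P : ℝ) - (K : ℝ)) ^ i / (Nat.factorial i : ℝ) ≤ (P.choose i : ℝ) := by
      have h1 : (((P + 1 - i : ℕ) : ℝ)) ^ i / (Nat.factorial i : ℝ) ≤ (P.choose i : ℝ) :=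
        Nat.pow_le_choose i P
      have h2 : ((P : ℝ) - (K : ℝ)) ^ i ≤ (((P + 1 - i : ℕ) : ℝ)) ^ i := by
        apply pow_le_pow_left₀ hPK.le
        have h3 : ((P - K : ℕ) : ℝ) ≤ (((P + 1 - i : ℕ)) : ℝ) := by
          have h4 : P - K ≤ P + 1 - i := by omega
          exact_mod_cast h4
        rw [Nat.cast_sub hP.le] at h3
        linarith
      calc ((P : ℝ) - (K : ℝ)) ^ i / (Nat.factorial i : ℝ)
          ≤ (((P + 1 - i : ℕ) : ℝ)) ^ i / (Nat.factorial i : ℝ) := by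
            gcongr
        _ ≤ (P.choose i : ℝ) := h1
    have hz0 : 0 ≤ z - 1 := by linarith
    have hnum : (U.card.choose i : ℝ) * (K.choose i : ℝ)
        ≤ ((m : ℝ) * K) ^ i / (Nat.factorial i : ℝ) * ((K : ℝ) ^ i / (Nat.factorial i : ℝ)) := by
      apply mul_le_mul hu hk (by positivity) (by positivity)
    have hPKpow : (0:ℝ) < ((P : ℝ) - (K : ℝ)) ^ i / (Nat.factorial i : ℝ) := by positivity
    have hdiv : (U.card.choose i : ℝ) * (K.choose i : ℝ) / (P.choose i : ℝ)
        ≤ (((m : ℝ) * K) ^ i / (Nat.factorial i : ℝ) * ((K : ℝ) ^ i / (Nat.factorial i : ℝ)))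
          / (((P : ℝ) - (K : ℝ)) ^ i / (Nat.factorial i : ℝ)) := by
      apply div_le_div₀ (by positivity) hnum hPKpow hp
    have heq : (((m : ℝ) * K) ^ i / (Nat.factorial i : ℝ) * ((K : ℝ) ^ i / (Nat.factorial i : ℝ)))
          / (((P : ℝ) - (K : ℝ)) ^ i / (Nat.factorial i : ℝ))
        = ((m : ℝ) * (K : ℝ) ^ 2 / ((P : ℝ) - (K : ℝ))) ^ i / (Nat.factorial i : ℝ) := by
      rw [div_pow, mul_pow, mul_pow]
      field_simp
      ring
    rw [heq] at hdiv
    calc (z - 1) ^ i * ((U.card.choose i : ℝ) * (K.choose i : ℝ) / (P.choose i : ℝ))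
        ≤ (z - 1) ^ i * (((m : ℝ) * (K : ℝ) ^ 2 / ((P : ℝ) - (K : ℝ))) ^ i / (Nat.factorial i : ℝ)) := by
          apply mul_le_mul_of_nonneg_left hdiv (by positivity)
      _ = ((z - 1) * ((m : ℝ) * (K : ℝ) ^ 2 / ((P : ℝ) - (K : ℝ)))) ^ i / (Nat.factorial i : ℝ) := by
          rw [mul_pow]; ring
      _ ≤ x ^ i / (Nat.factorial i : ℝ) := by
          gcongr ?_ / _
          apply pow_le_pow_left₀ (by positivity)
          rw [hx]
          have h1 : (0:ℝ) ≤ (m : ℝ) * (K : ℝ) ^ 2 / ((P : ℝ) - (K : ℝ)) := by positivity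
          nlinarith
    done
  calc (∑ i ∈ range (K + 1), 1 / (P.choose K : ℝ) *
          ((z - 1) ^ i * ((U.card.choose i : ℝ) * ((P - i).choose (K - i) : ℝ))))
      ≤ ∑ i ∈ range (K + 1), x ^ i / (Nat.factorial i : ℝ) := sum_le_sum step3
    _ ≤ Real.exp x := Real.sum_le_exp_of_nonneg hx0 (K + 1)
end
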